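/- arXiv:1401.1439 — 7 statements merged into one kernel-verified Lean document; each statement's English description precedes it below -/
import Mathlib

section
/- Let λ_i ∈ (0,1) for i ∈ ℕ with ∑_{i=1}^∞ λ_i = 1. If a_i ≥ 0 for all i and ∑_{i=1}^∞ λ_i a_i < ∞, then the infinite product ∏_{i=1}^∞ a_i^{λ_i} converges and ∏_{i=1}^∞ a_i^{λ_i} ≤ ∑_{i=1}^∞ λ_i a_i. -/
open Filter

/-- Infinite weighted AM-GM: for weights l i ∈ (0,1) summing to 1 and a i ≥ 0 with
∑ l i * a i < ∞, the infinite product ∏ (a i) ^ (l i) converges (as a limit of partial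
products) and is at most ∑ l i * a i. -/
theorem prod_rpow_le_tsum (l a : ℕ → ℝ)
    (hl : ∀ i, l i ∈ Set.Ioo (0 : ℝ) 1) (hsum : HasSum l 1)
    (ha : ∀ i, 0 ≤ a i) (hs : Summable (fun i => l i * a i)) :
    ∃ P : ℝ,
      Tendsto (fun n => ∏ i ∈ Finset.range n, a i ^ l i) atTop (nhds P) ∧
      P ≤ ∑' i, l i * a i := by
  have hS0 : (0:ℝ) ≤ ∑' i, l i * a i :=
    tsum_nonneg fun i => mul_nonneg (hl i).1.le (ha i)
  by_cases hzero : ∃ i, a i = 0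
  · obtain ⟨i0, hi0⟩ := hzero
    refine ⟨0, ?_, hS0⟩
    have : ∀ᶠ n in atTop, (0:ℝ) = ∏ i ∈ Finset.range n, a i ^ l i := by
      filter_upwards [eventually_ge_atTop (i0 + 1)] with n hn
      symm
      apply Finset.prod_eq_zero (Finset.mem_range.2 hn)
      rw [hi0, Real.zero_rpow (hl i0).1.ne']
    exact tendsto_const_nhds.congr' this
  · push_neg at hzero
    have hapos : ∀ i, 0 < a i := fun i => lt_of_le_of_ne (ha i) (Ne.symm (hzero i))
    set S : ℝ := ∑' i, l i * a i with hSdef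
    have hSpos : 0 < S := by
      have h0 : 0 < l 0 * a 0 := mul_pos (hl 0).1 (hapos 0)
      have := Summable.le_tsum hs 0 (fun j _ => mul_nonneg (hl j).1.le (ha j))
      linarith
    set f : ℕ → ℝ := fun i => Real.log (a i) * l i with hfdef
    set g : ℕ → ℝ := fun i => l i * Real.log S + l i * a i / S - l i with hgdef
    have hprod : ∀ n, ∏ i ∈ Finset.range n, a i ^ l i
        = Real.exp (∑ i ∈ Finset.range n, f i) := by
      intro n
      rw [Real.exp_sum]
      exact Finset.prod_congr rfl fun i _ => Real.rpow_def_of_pos (hapos i) _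
    have hfg : ∀ i, f i ≤ g i := by
      intro i
      have hlog : Real.log (a i / S) ≤ a i / S - 1 :=
        Real.log_le_sub_one_of_pos (div_pos (hapos i) hSpos)
      rw [Real.log_div (hapos i).ne' hSpos.ne'] at hlog
      have hli : 0 < l i := (hl i).1
      have := mul_le_mul_of_nonneg_right hlog hli.le
      simp only [hfdef, hgdef]
      have : (Real.log (a i) - Real.log S) * l i ≤ (a i / S - 1) * l i := this
      have heq : l i * a i / S = a i / S * l i := by ring
      nlinarith
    have hg1 : HasSum (fun i => l i * Real.log S) (1 * Real.log S) :=
      hsum.mul_right _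
    have hg2 : HasSum (fun i => l i * a i / S) (S / S) := hs.hasSum.div_const S
    have hgsum : HasSum g (1 * Real.log S + S / S - 1) := (hg1.add hg2).sub hsum
    have hgval : (1 : ℝ) * Real.log S + S / S - 1 = Real.log S := by
      rw [one_mul, div_self hSpos.ne']; ring
    rw [hgval] at hgsum
    by_cases hf : Summable f
    · refine ⟨Real.exp (∑' i, f i), ?_, ?_⟩
      · have ht := hf.hasSum.tendsto_sum_nat
        have := (Real.continuous_exp.tendsto _).comp ht
        exact this.congr fun n => (hprod n).symm
      · have hle : ∑' i, f i ≤ ∑' i, g i := Summable.tsum_le_tsum hfg hf hgsum.summable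
        rw [hgsum.tsum_eq] at hle
        calc Real.exp (∑' i, f i) ≤ Real.exp (Real.log S) := Real.exp_le_exp.2 hle
          _ = S := Real.exp_log hSpos
    · refine ⟨0, ?_, hS0⟩
      set d : ℕ → ℝ := fun i => g i - f i with hddef
      have hdnn : ∀ i, 0 ≤ d i := fun i => sub_nonneg.2 (hfg i)
      have hdns : ¬ Summable d := by
        intro hd
        exact hf ((hgsum.summable.sub hd).congr (fun i => by simp [hddef]))
      have hdtop : Tendsto (fun n => ∑ i ∈ Finset.range n, d i) atTop atTop := by
        by_contra h
        exact hdns ((summable_iff_not_tendsto_nat_atTop_of_nonneg hdnn).2 h)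
      have hsf : Tendsto (fun n => ∑ i ∈ Finset.range n, f i) atTop atBot := by
        have heq : ∀ n, ∑ i ∈ Finset.range n, f i
            = (∑ i ∈ Finset.range n, g i) + (-(∑ i ∈ Finset.range n, d i)) := by
          intro n
          rw [← Finset.sum_neg_distrib, ← Finset.sum_add_distrib]
          exact Finset.sum_congr rfl fun i _ => by simp [hddef]
        have := Tendsto.add_atBot (hgsum.tendsto_sum_nat) (tendsto_neg_atTop_atBot.comp hdtop)
        exact this.congr fun n => (heq n).symm
      have := Real.tendsto_exp_atBot.comp hsf
      exact this.congr fun n => (hprod n).symm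
end

section
/- Let 1 < p_i < ∞ for i ∈ ℕ with ∑_{i=1}^∞ 1/p_i = 1. If c_i ≥ 0 for all i and ∑_{i=1}^∞ c_i^{p_i}/p_i < ∞, then the infinite product ∏_{i=1}^∞ c_i converges and ∏_{i=1}^∞ c_i ≤ ∑_{i=1}^∞ c_i^{p_i}/p_i. -/
open Filter

private lemma young_finite (p c : ℕ → ℝ)
    (hp : ∀ i, 1 < p i) (hps : HasSum (fun i => 1 / p i) 1)
    (hc : ∀ i, 0 ≤ c i) (n : ℕ) :
    ∏ i ∈ Finset.range n, c i ≤
      (∑ i ∈ Finset.range n, c i ^ p i / p i) + (1 - ∑ i ∈ Finset.range n, 1 / p i) := by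
  have hppos : ∀ i, (0:ℝ) < p i := fun i => lt_trans one_pos (hp i)
  have hsn : ∑ i ∈ Finset.range n, 1 / p i ≤ 1 :=
    sum_le_hasSum _ (fun i _ => le_of_lt (div_pos one_pos (hppos i))) hps
  set w : ℕ → ℝ := fun i => if i = n then 1 - ∑ i ∈ Finset.range n, 1 / p i else 1 / p i with hw
  set z : ℕ → ℝ := fun i => if i = n then 1 else c i ^ p i with hz
  have key := Real.geom_mean_le_arith_mean_weighted (insert n (Finset.range n)) w z
    (by
      intro i hi
      simp only [hw]
      split
      · linarith
      · exact le_of_lt (div_pos one_pos (hppos i)))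
    (by
      rw [Finset.sum_insert (by simp)]
      have : ∑ i ∈ Finset.range n, w i = ∑ i ∈ Finset.range n, 1 / p i := by
        apply Finset.sum_congr rfl
        intro i hi
        have : i ≠ n := Nat.ne_of_lt (Finset.mem_range.mp hi)
        simp [hw, this]
      rw [this]; simp [hw]
    )
    (by
      intro i hi
      simp only [hz]
      split
      · exact zero_le_one
      · exact Real.rpow_nonneg (hc i) _)
  rw [Finset.prod_insert (by simp), Finset.sum_insert (by simp)] at key
  have hprod : ∀ i ∈ Finset.range n, z i ^ w i = c i := by
    intro i hi
    have hin : i ≠ n := Nat.ne_of_lt (Finset.mem_range.mp hi)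
    simp only [hz, hw, if_neg hin]
    rw [← Real.rpow_mul (hc i), mul_one_div_cancel (ne_of_gt (hppos i)), Real.rpow_one]
  rw [Finset.prod_congr rfl hprod] at key
  have hsum : ∀ i ∈ Finset.range n, w i * z i = c i ^ p i / p i := by
    intro i hi
    have hin : i ≠ n := Nat.ne_of_lt (Finset.mem_range.mp hi)
    simp only [hz, hw, if_neg hin]
    ring
  rw [Finset.sum_congr rfl hsum] at key
  simp only [hz, hw, if_pos rfl] at key
  calc ∏ i ∈ Finset.range n, c i ≤ 1 ^ (1 - ∑ i ∈ Finset.range n, 1 / p i) *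
        ∏ i ∈ Finset.range n, c i := by rw [Real.one_rpow, one_mul]
    _ ≤ _ := by
        refine key.trans_eq ?_
        ring

/-- Infinite Young-type inequality: for exponents p i ∈ (1,∞) with ∑ 1/(p i) = 1 and
c i ≥ 0 with ∑ (c i)^(p i) / p i < ∞, the infinite product ∏ c i converges (as a limit of
partial products) and is at most ∑ (c i)^(p i) / p i. -/
theorem prod_le_tsum_rpow_div (p c : ℕ → ℝ)
    (hp : ∀ i, 1 < p i) (hps : HasSum (fun i => 1 / p i) 1)
    (hc : ∀ i, 0 ≤ c i) (hs : Summable (fun i => c i ^ p i / p i)) :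
    ∃ P : ℝ,
      Tendsto (fun n => ∏ i ∈ Finset.range n, c i) atTop (nhds P) ∧
      P ≤ ∑' i, c i ^ p i / p i := by
  have hppos : ∀ i, (0:ℝ) < p i := fun i => lt_trans one_pos (hp i)
  have htsum_nonneg : 0 ≤ ∑' i, c i ^ p i / p i :=
    tsum_nonneg fun i => div_nonneg (Real.rpow_nonneg (hc i) _) (hppos i).le
  -- limit of the RHS bound sequence
  have hT : Tendsto (fun n => (∑ i ∈ Finset.range n, c i ^ p i / p i) +
      (1 - ∑ i ∈ Finset.range n, 1 / p i)) atTop (nhds (∑' i, c i ^ p i / p i)) := by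
    have h1 := hs.hasSum.tendsto_sum_nat
    have h2 := hps.tendsto_sum_nat
    have := h1.add ((tendsto_const_nhds (x := (1:ℝ))).sub h2)
    simpa using this
  by_cases hzero : ∃ i, c i = 0
  · obtain ⟨i, hi⟩ := hzero
    refine ⟨0, ?_, htsum_nonneg⟩
    apply Tendsto.congr' (f₁ := fun _ => (0:ℝ))
    · filter_upwards [eventually_ge_atTop (i + 1)] with n hn
      exact (Finset.prod_eq_zero (Finset.mem_range.mpr hn) hi).symm
    · exact tendsto_const_nhds
  · push_neg at hzero
    have hcpos : ∀ i, 0 < c i := fun i => (hc i).lt_of_ne (Ne.symm (hzero i))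
    set f : ℕ → ℝ := fun i => Real.log (c i) with hf
    set b : ℕ → ℝ := fun i => c i ^ p i / p i - 1 / p i with hb
    have hfb : ∀ i, f i ≤ b i := by
      intro i
      have hlog : Real.log (c i ^ p i) ≤ c i ^ p i - 1 :=
        Real.log_le_sub_one_of_pos (Real.rpow_pos_of_pos (hcpos i) _)
      rw [Real.log_rpow (hcpos i)] at hlog
      have : Real.log (c i) ≤ (c i ^ p i - 1) / p i := by
        rw [le_div_iff₀ (hppos i), mul_comm]; exact hlog
      simpa [hb, sub_div] using this
    have hbsum : Summable b := hs.sub hps.summable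
    set g : ℕ → ℝ := fun i => b i - f i with hg
    have hgnn : ∀ i, 0 ≤ g i := fun i => sub_nonneg.mpr (hfb i)
    have hprod_eq : ∀ n, ∏ i ∈ Finset.range n, c i =
        Real.exp (∑ i ∈ Finset.range n, f i) := by
      intro n
      rw [Real.exp_sum]
      exact Finset.prod_congr rfl fun i _ => (Real.exp_log (hcpos i)).symm
    by_cases hgs : Summable g
    · have hfs : Summable f := by
        have := hbsum.sub hgs
        simpa [hg] using this
      refine ⟨Real.exp (∑' i, f i), ?_, ?_⟩
      · have h := hfs.hasSum.tendsto_sum_nat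
        have := (Real.continuous_exp.tendsto _).comp h
        apply Tendsto.congr' (f₁ := fun n => Real.exp (∑ i ∈ Finset.range n, f i))
        · filter_upwards with n using (hprod_eq n).symm
        · exact this
      · refine le_of_tendsto_of_tendsto' ?_ hT (young_finite p c hp hps hc)
        have h := hfs.hasSum.tendsto_sum_nat
        have := (Real.continuous_exp.tendsto _).comp h
        apply Tendsto.congr' (f₁ := fun n => Real.exp (∑ i ∈ Finset.range n, f i))
        · filter_upwards with n using (hprod_eq n).symm
        · exact this
    · -- g partial sums tend to atTop, so f partial sums tend to atBot
      have hgtop : Tendsto (fun n => ∑ i ∈ Finset.range n, g i) atTop atTop := by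
        by_contra h
        exact hgs ((summable_iff_not_tendsto_nat_atTop_of_nonneg hgnn).mpr h)
      have hfbot : Tendsto (fun n => ∑ i ∈ Finset.range n, f i) atTop atBot := by
        have heq : ∀ n, ∑ i ∈ Finset.range n, f i =
            (∑ i ∈ Finset.range n, b i) - ∑ i ∈ Finset.range n, g i := by
          intro n
          rw [← Finset.sum_sub_distrib]
          exact Finset.sum_congr rfl fun i _ => by simp [hg]
        simp only [heq]
        have h2 : Tendsto (fun n => (∑ i ∈ Finset.range n, b i) +
            -(∑ i ∈ Finset.range n, g i)) atTop atBot :=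
          hbsum.hasSum.tendsto_sum_nat.add_atBot (tendsto_neg_atTop_atBot.comp hgtop)
        exact h2.congr fun n => by ring
      refine ⟨0, ?_, htsum_nonneg⟩
      have := Real.tendsto_exp_atBot.comp hfbot
      apply Tendsto.congr' (f₁ := fun n => Real.exp (∑ i ∈ Finset.range n, f i))
      · filter_upwards with n using (hprod_eq n).symm
      · exact this
end

section
/- Let (Ω, F, μ) be a measure space, f_i : Ω → [0,∞) measurable for i ∈ ℕ, and 1 < p_i < ∞ with ∑_{i=1}^∞ 1/p_i = 1. If ‖f_i‖_{L^{p_i}} = 1 for all i, then the pointwise infinite product ∏_{i=1}^∞ f_i is well defined almost everywhere and ‖∏_{i=1}^∞ f_i‖_{L^1} ≤ 1. -/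
open MeasureTheory Filter

/-- AM-GM with deficit weight. -/
lemma amgm_deficit (n : ℕ) (w z : ℕ → ℝ) (hw : ∀ i, 0 ≤ w i) (hz : ∀ i, 0 ≤ z i)
    (hw1 : ∑ i ∈ Finset.range n, w i ≤ 1) :
    ∏ i ∈ Finset.range n, z i ^ w i ≤
      (∑ i ∈ Finset.range n, w i * z i) + (1 - ∑ i ∈ Finset.range n, w i) := by
  set s := ∑ i ∈ Finset.range n, w i with hs
  have key := Real.geom_mean_le_arith_mean_weighted (Finset.range (n+1))
      (fun i => if i = n then 1 - s else w i) (fun i => if i = n then 1 else z i)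
      (fun i _ => by split <;> [linarith; exact hw _])
      (by
        rw [Finset.sum_range_succ]
        have : ∑ i ∈ Finset.range n, (if i = n then 1 - s else w i) = s := by
          rw [hs]
          exact Finset.sum_congr rfl fun i hi => by
            simp [Nat.ne_of_lt (Finset.mem_range.mp hi)]
        rw [this]; simp)
      (fun i _ => by split <;> [norm_num; exact hz _])
  rw [Finset.prod_range_succ, Finset.sum_range_succ] at key
  simp only [if_pos rfl] at key
  have hprod : ∏ i ∈ Finset.range n, (if i = n then (1:ℝ) else z i) ^ (if i = n then 1 - s else w i)
      = ∏ i ∈ Finset.range n, z i ^ w i :=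
    Finset.prod_congr rfl fun i hi => by
      simp [Nat.ne_of_lt (Finset.mem_range.mp hi)]
  have hsum : ∑ i ∈ Finset.range n, (if i = n then 1 - s else w i) * (if i = n then (1:ℝ) else z i)
      = ∑ i ∈ Finset.range n, w i * z i :=
    Finset.sum_congr rfl fun i hi => by
      simp [Nat.ne_of_lt (Finset.mem_range.mp hi)]
  simp only [if_true] at key
  rw [hprod, hsum, Real.one_rpow, mul_one, mul_one] at key
  exact key


/-- Generalized Hölder (normalized case): if ∑ 1/(p i) = 1, each f i is nonnegative
measurable with ‖f i‖_{L^{p i}} = 1, then the pointwise infinite product ∏ f i is well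
defined a.e. (as a limit of partial products) and has L¹ norm at most 1. -/
theorem lintegral_prod_le_one
    {Ω : Type*} [MeasurableSpace Ω] (μ : Measure Ω)
    (p : ℕ → ℝ) (hp : ∀ i, 1 < p i) (hps : HasSum (fun i => 1 / p i) 1)
    (f : ℕ → Ω → ℝ) (hmeas : ∀ i, Measurable (f i)) (hpos : ∀ i x, 0 ≤ f i x)
    (hnorm : ∀ i, (∫⁻ x, ENNReal.ofReal (f i x) ^ p i ∂μ) ^ (1 / p i) = 1) :
    ∃ g : Ω → ℝ,
      (∀ᵐ x ∂μ, Tendsto (fun n => ∏ i ∈ Finset.range n, f i x) atTop (nhds (g x))) ∧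
      ∫⁻ x, ENNReal.ofReal (g x) ∂μ ≤ 1 := by
  have hp0 : ∀ i, 0 < p i := fun i => lt_trans one_pos (hp i)
  have hw0 : ∀ i, 0 ≤ 1 / p i := fun i => div_nonneg zero_le_one (hp0 i).le
  -- per-term integral equals 1
  have hI : ∀ i, (∫⁻ x, ENNReal.ofReal (f i x) ^ p i ∂μ) = 1 := by
    intro i
    have h := congrArg (· ^ p i) (hnorm i)
    simpa [← ENNReal.rpow_mul, one_div, inv_mul_cancel₀ (hp0 i).ne'] using h
  -- dominating function
  set F : ℕ → Ω → ℝ := fun i x => f i x ^ p i / p i with hF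
  have hFnn : ∀ i x, 0 ≤ F i x := fun i x =>
    div_nonneg (Real.rpow_nonneg (hpos i x) _) (hp0 i).le
  have hmeasF : ∀ i, Measurable fun x => ENNReal.ofReal (F i x) := fun i =>
    ENNReal.measurable_ofReal.comp (((hmeas i).pow measurable_const).div_const _)
  -- integral of dominating function
  have hintF : ∫⁻ x, ∑' i, ENNReal.ofReal (F i x) ∂μ = 1 := by
    rw [lintegral_tsum fun i => (hmeasF i).aemeasurable]
    have hterm : ∀ i, ∫⁻ x, ENNReal.ofReal (F i x) ∂μ = ENNReal.ofReal (1 / p i) := by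
      intro i
      have heq : ∀ x, ENNReal.ofReal (F i x)
          = ENNReal.ofReal (f i x) ^ p i * ENNReal.ofReal (1 / p i) := by
        intro x
        rw [hF]; simp only
        rw [div_eq_mul_inv, ← one_div, ENNReal.ofReal_mul' (hw0 i),
          ENNReal.ofReal_rpow_of_nonneg (hpos i x) (hp0 i).le]
      simp_rw [heq]
      rw [lintegral_mul_const _ ((hmeas i).ennreal_ofReal.pow measurable_const),
        hI i, one_mul]
    simp_rw [hterm]
    rw [← ENNReal.ofReal_tsum_of_nonneg hw0 hps.summable, hps.tsum_eq, ENNReal.ofReal_one]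
  -- a.e. finiteness
  have hSmeas : Measurable fun x => ∑' i, ENNReal.ofReal (F i x) :=
    Measurable.ennreal_tsum hmeasF
  have hae : ∀ᵐ x ∂μ, (∑' i, ENNReal.ofReal (F i x)) < ⊤ :=
    ae_lt_top hSmeas (by rw [hintF]; exact ENNReal.one_ne_top)
  -- define g via limUnder
  set P : ℕ → Ω → ℝ := fun n x => ∏ i ∈ Finset.range n, f i x with hPdef
  set g : Ω → ℝ := fun x => limUnder atTop (fun n => P n x) with hg
  -- key pointwise facts on the good set
  have hkey : ∀ x, (∑' i, ENNReal.ofReal (F i x)) < ⊤ →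
      Tendsto (fun n => P n x) atTop (nhds (g x)) ∧
        ENNReal.ofReal (g x) ≤ ∑' i, ENNReal.ofReal (F i x) := by
    intro x hx
    have hsum : Summable fun i => F i x := by
      have := ENNReal.summable_toReal hx.ne
      refine this.congr fun i => ?_
      exact ENNReal.toReal_ofReal (hFnn i x)
    set S := ∑' i, F i x with hS
    have hofS : ENNReal.ofReal S = ∑' i, ENNReal.ofReal (F i x) :=
      ENNReal.ofReal_tsum_of_nonneg (fun i => hFnn i x) hsum
    -- partial product bound
    have hPbound : ∀ n, P n x ≤ S + (1 - ∑ i ∈ Finset.range n, 1 / p i) := by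
      intro n
      have h1 : ∑ i ∈ Finset.range n, 1 / p i ≤ 1 :=
        sum_le_hasSum _ (fun i _ => hw0 i) hps
      have h2 := amgm_deficit n (fun i => 1 / p i) (fun i => f i x ^ p i)
        hw0 (fun i => Real.rpow_nonneg (hpos i x) _) h1
      have h3 : ∏ i ∈ Finset.range n, (f i x ^ p i) ^ (1 / p i) = P n x :=
        Finset.prod_congr rfl fun i _ => by
          rw [← Real.rpow_mul (hpos i x), mul_one_div, div_self (hp0 i).ne', Real.rpow_one]
      have h4 : ∑ i ∈ Finset.range n, (1 / p i) * (f i x ^ p i) ≤ S := by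
        have : ∀ i, (1 / p i) * (f i x ^ p i) = F i x := fun i => by
          rw [hF]; ring
        simp_rw [this]
        exact Summable.sum_le_tsum _ (fun i _ => hFnn i x) hsum
      rw [h3] at h2
      linarith
    -- convergence of partial products
    set u : ℕ → ℝ := fun n => ∏ i ∈ Finset.range n, max (f i x) 1 with hu
    set v : ℕ → ℝ := fun n => ∏ i ∈ Finset.range n, min (f i x) 1 with hv
    have hPuv : ∀ n, P n x = v n * u n := by
      intro n
      rw [hu, hv, ← Finset.prod_mul_distrib]
      exact (Finset.prod_congr rfl fun i _ => by rw [min_mul_max, mul_one]).symm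
    have humono : Monotone u := monotone_nat_of_le_succ fun n => by
      rw [hu]; simp only
      rw [Finset.prod_range_succ]
      nth_rewrite 1 [← mul_one (∏ i ∈ Finset.range n, max (f i x) 1)]
      exact mul_le_mul_of_nonneg_left (le_max_right _ _)
        (Finset.prod_nonneg fun i _ => le_trans zero_le_one (le_max_right _ _))
    have hubd : ∀ n, u n ≤ Real.exp S := by
      intro n
      have hfac : ∀ i, max (f i x) 1 ≤ Real.exp (F i x) := by
        intro i
        have hyoung : f i x ≤ F i x + 1 := by
          have hconj : (p i).HolderConjugate (p i / (p i - 1)) :=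
            Real.HolderConjugate.conjExponent (hp i)
          have := Real.young_inequality_of_nonneg (hpos i x) zero_le_one hconj
          rw [mul_one, Real.one_rpow] at this
          have hq : 1 / (p i / (p i - 1)) ≤ 1 := by
            rw [one_div_div]
            have := hp0 i
            rw [div_le_one this]; linarith
          calc f i x ≤ f i x ^ p i / p i + 1 / (p i / (p i - 1)) := by
                simpa [one_div] using this
            _ ≤ F i x + 1 := by rw [hF]; simp only; linarith
        have h1 : max (f i x) 1 ≤ F i x + 1 := by
          apply max_le hyoung
          have := hFnn i x; linarith
        calc max (f i x) 1 ≤ F i x + 1 := h1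
          _ ≤ Real.exp (F i x) := by linarith [Real.add_one_le_exp (F i x)]
      calc u n ≤ ∏ i ∈ Finset.range n, Real.exp (F i x) :=
            Finset.prod_le_prod (fun i _ => le_trans zero_le_one (le_max_right _ _))
              (fun i _ => hfac i)
        _ = Real.exp (∑ i ∈ Finset.range n, F i x) := by rw [Real.exp_sum]
        _ ≤ Real.exp S := Real.exp_le_exp.mpr (Summable.sum_le_tsum _ (fun i _ => hFnn i x) hsum)
    have huconv : Tendsto u atTop (nhds (⨆ n, u n)) :=
      tendsto_atTop_ciSup humono ⟨Real.exp S, fun y ⟨n, hn⟩ => hn ▸ hubd n⟩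
    have hvanti : Antitone v := antitone_nat_of_succ_le fun n => by
      rw [hv]; simp only
      rw [Finset.prod_range_succ]
      nth_rewrite 2 [← mul_one (∏ i ∈ Finset.range n, min (f i x) 1)]
      exact mul_le_mul_of_nonneg_left (min_le_right _ _)
        (Finset.prod_nonneg fun i _ => le_min (hpos i x) zero_le_one)
    have hvconv : Tendsto v atTop (nhds (⨅ n, v n)) :=
      tendsto_atTop_ciInf hvanti ⟨0, fun y ⟨n, hn⟩ =>
        hn ▸ Finset.prod_nonneg fun i _ => le_min (hpos i x) zero_le_one⟩
    have hPconv : Tendsto (fun n => P n x) atTop (nhds ((⨅ n, v n) * (⨆ n, u n))) := by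
      have := hvconv.mul huconv
      refine this.congr fun n => (hPuv n).symm
    have hgx : Tendsto (fun n => P n x) atTop (nhds (g x)) := by
      rw [hg]; simp only
      rw [hPconv.limUnder_eq]
      exact hPconv
    refine ⟨hgx, ?_⟩
    -- limit bound
    have hsn : Tendsto (fun n => S + (1 - ∑ i ∈ Finset.range n, 1 / p i)) atTop
        (nhds (S + (1 - 1))) :=
      (tendsto_const_nhds.add (tendsto_const_nhds.sub hps.tendsto_sum_nat))
    have hle : g x ≤ S := by
      have := le_of_tendsto_of_tendsto' hgx hsn hPbound
      linarith
    calc ENNReal.ofReal (g x) ≤ ENNReal.ofReal S := ENNReal.ofReal_le_ofReal hle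
      _ = _ := hofS
  refine ⟨g, ?_, ?_⟩
  · exact hae.mono fun x hx => (hkey x hx).1
  · calc ∫⁻ x, ENNReal.ofReal (g x) ∂μ ≤ ∫⁻ x, ∑' i, ENNReal.ofReal (F i x) ∂μ :=
        lintegral_mono_ae (hae.mono fun x hx => (hkey x hx).2)
      _ = 1 := hintF
end

section
/- Let (Ω, F, μ) be a measure space, f_i : Ω → [0,∞) measurable for i ∈ ℕ, and 1 < p_i < ∞ with ∑_{i=1}^∞ 1/p_i = 1. If the infinite product ∏_{i=1}^∞ ‖f_i‖_{L^{p_i}} converges to a finite value, then the pointwise product ∏_{i=1}^∞ f_i is well defined almost everywhere and ‖∏_{i=1}^∞ f_i‖_{L^1} ≤ ∏_{i=1}^∞ ‖f_i‖_{L^{p_i}}. -/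
open MeasureTheory Filter
open scoped ENNReal

private lemma rpow_prod_range (x : ℝ≥0∞) {t : ℕ → ℝ} (ht : ∀ i, 0 ≤ t i) (n : ℕ) :
    x ^ (∑ i ∈ Finset.range n, t i) = ∏ i ∈ Finset.range n, x ^ t i := by
  induction n with
  | zero => simp
  | succ n ih =>
    rw [Finset.sum_range_succ, Finset.prod_range_succ,
      ENNReal.rpow_add_of_nonneg _ _ (Finset.sum_nonneg fun i _ => ht i) (ht n), ih]

private lemma holder_slack {Ω : Type*} [MeasurableSpace Ω] (μ : Measure Ω) (n : ℕ)
    (G : ℕ → Ω → ℝ≥0∞) (hG : ∀ i, Measurable (G i))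
    (t : ℕ → ℝ) (ht : ∀ i, 0 < t i) (hs : ∑ i ∈ Finset.range n, t i < 1) :
    ∫⁻ x, ∏ i ∈ Finset.range n, G i x ^ t i ∂μ ≤
      (∏ i ∈ Finset.range n, (∫⁻ x, G i x ∂μ) ^ t i) *
        (μ Set.univ) ^ (1 - ∑ i ∈ Finset.range n, t i) := by
  classical
  set τ := 1 - ∑ i ∈ Finset.range n, t i with hτ
  have hτpos : 0 < τ := by rw [hτ]; linarith
  set G' : ℕ → Ω → ℝ≥0∞ := fun i => if i < n then G i else fun _ => 1 with hG'
  set t' : ℕ → ℝ := fun i => if i < n then t i else τ with ht'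
  have key := ENNReal.lintegral_prod_norm_pow_le (μ := μ) (Finset.range (n+1))
      (f := G') (p := t')
      (fun i _ => by dsimp [G']; split; exacts [(hG _).aemeasurable, aemeasurable_const])
      (by
        rw [Finset.sum_range_succ]
        have : ∀ i ∈ Finset.range n, t' i = t i := fun i hi => by
          simp [ht', Finset.mem_range.mp hi]
        rw [Finset.sum_congr rfl this]
        simp [ht', hτ])
      (fun i _ => by dsimp [t']; split; exacts [(ht _).le, hτpos.le])
  have hLe : ∀ x, ∏ i ∈ Finset.range (n+1), G' i x ^ t' i
      = ∏ i ∈ Finset.range n, G i x ^ t i := by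
    intro x
    rw [Finset.prod_range_succ]
    have : ∀ i ∈ Finset.range n, G' i x ^ t' i = G i x ^ t i := fun i hi => by
      simp [hG', ht', Finset.mem_range.mp hi]
    rw [Finset.prod_congr rfl this]
    simp [hG', ht']
  have hR : ∏ i ∈ Finset.range (n+1), (∫⁻ x, G' i x ∂μ) ^ t' i
      = (∏ i ∈ Finset.range n, (∫⁻ x, G i x ∂μ) ^ t i) * (μ Set.univ) ^ τ := by
    rw [Finset.prod_range_succ]
    have : ∀ i ∈ Finset.range n,
        (∫⁻ x, G' i x ∂μ) ^ t' i = (∫⁻ x, G i x ∂μ) ^ t i := fun i hi => by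
      simp [hG', ht', Finset.mem_range.mp hi]
    rw [Finset.prod_congr rfl this]
    simp [hG', ht', lintegral_one]
  calc ∫⁻ x, ∏ i ∈ Finset.range n, G i x ^ t i ∂μ
      = ∫⁻ x, ∏ i ∈ Finset.range (n+1), G' i x ^ t' i ∂μ := by
        simp_rw [hLe]
    _ ≤ ∏ i ∈ Finset.range (n+1), (∫⁻ x, G' i x ∂μ) ^ t' i := key
    _ = _ := hR

/-- Generalized Hölder inequality for infinitely many functions: if ∑ 1/(p i) = 1, each
f i is nonnegative measurable, and the infinite product of the norms ‖f i‖_{L^{p i}}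
converges to a finite value L, then the pointwise infinite product ∏ f i is well defined
a.e. and ‖∏ f i‖_{L¹} ≤ L = ∏ ‖f i‖_{L^{p i}}. -/
theorem lintegral_prod_le_prod_norm
    {Ω : Type*} [MeasurableSpace Ω] (μ : Measure Ω)
    (p : ℕ → ℝ) (hp : ∀ i, 1 < p i) (hps : HasSum (fun i => 1 / p i) 1)
    (f : ℕ → Ω → ℝ) (hmeas : ∀ i, Measurable (f i)) (hpos : ∀ i x, 0 ≤ f i x)
    (L : ℝ≥0∞) (hL : L ≠ ⊤)
    (hprod : Tendsto
      (fun n => ∏ i ∈ Finset.range n, (∫⁻ x, ENNReal.ofReal (f i x) ^ p i ∂μ) ^ (1 / p i))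
      atTop (nhds L)) :
    ∃ g : Ω → ℝ,
      (∀ᵐ x ∂μ, Tendsto (fun n => ∏ i ∈ Finset.range n, f i x) atTop (nhds (g x))) ∧
      ∫⁻ x, ENNReal.ofReal (g x) ∂μ ≤ L := by
  classical
  have hp0 : ∀ i, 0 < p i := fun i => lt_trans one_pos (hp i)
  have ht0 : ∀ i, 0 < 1 / p i := fun i => one_div_pos.mpr (hp0 i)
  set F : ℕ → Ω → ℝ≥0∞ := fun i x => ENNReal.ofReal (f i x) with hF
  have hFmeas : ∀ i, Measurable (F i) := fun i =>
    ENNReal.measurable_ofReal.comp (hmeas i)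
  set c : ℕ → ℝ≥0∞ := fun i => (∫⁻ x, F i x ^ p i ∂μ) ^ (1 / p i) with hc
  -- degenerate case : some norm is zero
  by_cases hzero : ∃ i, ∫⁻ x, F i x ^ p i ∂μ = 0
  · obtain ⟨i, hi⟩ := hzero
    have hae : ∀ᵐ x ∂μ, F i x ^ p i = 0 :=
      (lintegral_eq_zero_iff ((hFmeas i).pow_const (p i))).mp hi
    refine ⟨fun _ => 0, ?_, by simp⟩
    filter_upwards [hae] with x hx
    have hfi : f i x = 0 := by
      have h0 : F i x = 0 := by
        rcases ENNReal.rpow_eq_zero_iff.mp hx with ⟨h, _⟩ | ⟨_, h⟩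
        · exact h
        · linarith [hp0 i]
      have := ENNReal.ofReal_eq_zero.mp h0
      exact le_antisymm this (hpos i x)
    refine Tendsto.congr' ?_ tendsto_const_nhds
    filter_upwards [eventually_ge_atTop (i+1)] with n hn
    exact (Finset.prod_eq_zero (Finset.mem_range.mpr hn) hfi).symm
  push_neg at hzero
  have hcne0 : ∀ i, c i ≠ 0 := by
    intro i h
    rcases ENNReal.rpow_eq_zero_iff.mp h with ⟨h1, _⟩ | ⟨_, h2⟩
    · exact hzero i h1
    · exact absurd h2 (not_lt.mpr (ht0 i).le)
  -- degenerate case : some norm is infinite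
  by_cases htop : ∃ i, ∫⁻ x, F i x ^ p i ∂μ = ⊤
  · exfalso
    obtain ⟨i, hi⟩ := htop
    have hci : c i = ⊤ := by
      rw [hc]; simp only [hi]
      exact ENNReal.top_rpow_of_pos (ht0 i)
    have hev : ∀ᶠ n in atTop, (∏ j ∈ Finset.range n, c j) = ⊤ := by
      filter_upwards [eventually_ge_atTop (i+1)] with n hn
      have hmem : i ∈ Finset.range n := Finset.mem_range.mpr hn
      rw [← Finset.mul_prod_erase _ _ hmem, hci]
      exact ENNReal.top_mul (Finset.prod_ne_zero_iff.mpr fun j _ => hcne0 j)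
    have : Tendsto (fun n => ∏ j ∈ Finset.range n, c j) atTop (nhds ⊤) :=
      Tendsto.congr' (hev.mono fun n h => h.symm) tendsto_const_nhds
    exact hL (tendsto_nhds_unique hprod this)
  push_neg at htop
  have hcnetop : ∀ i, c i ≠ ⊤ := by
    intro i h
    rcases ENNReal.rpow_eq_top_iff.mp h with ⟨_, h2⟩ | ⟨h1, _⟩
    · exact absurd h2 (not_lt.mpr (ht0 i).le)
    · exact htop i h1
  -- normalization
  set H : ℕ → Ω → ℝ≥0∞ := fun i x => F i x / c i with hH
  have hHmeas : ∀ i, Measurable (H i) := fun i => (hFmeas i).div_const _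
  have hcpow : ∀ i, c i ^ p i = ∫⁻ x, F i x ^ p i ∂μ := by
    intro i
    rw [hc]
    rw [← ENNReal.rpow_mul, one_div, inv_mul_cancel₀ (hp0 i).ne', ENNReal.rpow_one]
  have hHnorm : ∀ i, ∫⁻ x, H i x ^ p i ∂μ = 1 := by
    intro i
    have hpt : ∀ x, H i x ^ p i = F i x ^ p i * ((c i) ^ p i)⁻¹ := by
      intro x
      rw [hH]; dsimp only
      rw [ENNReal.div_rpow_of_nonneg _ _ (hp0 i).le, div_eq_mul_inv]
    simp_rw [hpt]
    rw [lintegral_mul_const' _ _ (by simp [hcpow i, hzero i]), hcpow i,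
      ENNReal.mul_inv_cancel (hzero i) (htop i)]
  have hFeq : ∀ i x, F i x = c i * H i x := fun i x =>
    (ENNReal.mul_div_cancel (hcne0 i) (hcnetop i)).symm
  -- partial products of min and max
  set Amin : ℕ → Ω → ℝ≥0∞ := fun n x => ∏ i ∈ Finset.range n, min (H i x) 1 with hAmin
  set Bmax : ℕ → Ω → ℝ≥0∞ := fun n x => ∏ i ∈ Finset.range n, max (H i x) 1 with hBmax
  set A : Ω → ℝ≥0∞ := fun x => ⨅ n, Amin n x with hA
  set B : Ω → ℝ≥0∞ := fun x => ⨆ n, Bmax n x with hB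
  have hAminmeas : ∀ n, Measurable (Amin n) := fun n =>
    Finset.measurable_prod _ fun i _ => (hHmeas i).min measurable_const
  have hBmaxmeas : ∀ n, Measurable (Bmax n) := fun n =>
    Finset.measurable_prod _ fun i _ => (hHmeas i).max measurable_const
  have hAmeas : Measurable A := Measurable.iInf hAminmeas
  have hBmeas : Measurable B := Measurable.iSup hBmaxmeas
  have hAanti : ∀ x, Antitone fun n => Amin n x := fun x =>
    antitone_nat_of_succ_le fun n => by
      rw [hAmin]; dsimp only
      rw [Finset.prod_range_succ]
      exact mul_le_of_le_one_right' (min_le_right _ _)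
  have hBmono : ∀ x, Monotone fun n => Bmax n x := fun x =>
    monotone_nat_of_le_succ fun n => by
      rw [hBmax]; dsimp only
      rw [Finset.prod_range_succ]
      exact le_mul_of_one_le_right' (le_max_right _ _)
  have hABprod : ∀ x n, Amin n x * Bmax n x = ∏ i ∈ Finset.range n, H i x := by
    intro x n
    rw [hAmin, hBmax]; dsimp only
    rw [← Finset.prod_mul_distrib]
    exact Finset.prod_congr rfl fun i _ => by rw [min_mul_max, mul_one]
  have hAle1 : ∀ x, A x ≤ 1 := fun x => (iInf_le _ 0).trans (by simp [hAmin])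
  have hAzero : ∀ x i, F i x = 0 → A x = 0 := by
    intro x i h
    refine le_antisymm ((iInf_le _ (i+1)).trans ?_) (zero_le)
    rw [hAmin]; dsimp only
    rw [Finset.prod_eq_zero (Finset.mem_range.mpr (Nat.lt_succ_self i))
      (by simp [hH, h, ENNReal.zero_div])]
  -- exponent partial sums
  set s : ℕ → ℝ := fun n => ∑ i ∈ Finset.range n, 1 / p i with hs
  have hsnonneg : ∀ n, 0 ≤ s n := fun n => Finset.sum_nonneg fun i _ => (ht0 i).le
  have hslt1 : ∀ n, s n < 1 := by
    intro n
    have h1 : s n + 1 / p n = ∑ i ∈ Finset.range (n+1), 1 / p i :=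
      (Finset.sum_range_succ _ n).symm
    have h2 : ∑ i ∈ Finset.range (n+1), 1 / p i ≤ 1 := by
      have := Summable.sum_le_tsum (Finset.range (n+1)) (fun i _ => (ht0 i).le) hps.summable
      rwa [hps.tsum_eq] at this
    linarith [ht0 n]
  have hstend : Tendsto s atTop (nhds 1) := hps.tendsto_sum_nat
  -- the exhausting sets
  set E : ℕ → Set Ω := fun k => {x | 1 / (k+1 : ℝ) < f 0 x} with hE
  have hEmeas : ∀ k, MeasurableSet (E k) := fun k =>
    measurableSet_lt measurable_const (hmeas 0)
  have hEmono : Monotone E := by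
    intro a b hab x hx
    have hx' : 1 / (a+1 : ℝ) < f 0 x := hx
    show 1 / (b+1 : ℝ) < f 0 x
    refine lt_of_le_of_lt ?_ hx'
    apply one_div_le_one_div_of_le
    · positivity
    · have : (a : ℝ) ≤ b := Nat.cast_le.mpr hab
      linarith
  have hEfin : ∀ k, μ (E k) ≠ ⊤ := by
    intro k
    set ε : ℝ≥0∞ := ENNReal.ofReal (1 / (k+1 : ℝ)) ^ p 0 with hε
    have hεne0 : ε ≠ 0 := by
      refine (ENNReal.rpow_pos ?_ ENNReal.ofReal_ne_top).ne'
      exact ENNReal.ofReal_pos.mpr (by positivity)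
    have hsub : E k ⊆ {x | ε ≤ F 0 x ^ p 0} := fun x hx =>
      ENNReal.rpow_le_rpow (ENNReal.ofReal_le_ofReal (le_of_lt hx)) (hp0 0).le
    have hcheb := mul_meas_ge_le_lintegral₀ (μ := μ) ((hFmeas 0).pow_const (p 0)).aemeasurable ε
    intro htopk
    have hle : ε * μ (E k) ≤ ∫⁻ x, F 0 x ^ p 0 ∂μ :=
      le_trans (mul_le_mul_right (measure_mono hsub) ε) hcheb
    rw [htopk, ENNReal.mul_top hεne0] at hle
    exact htop 0 (top_le_iff.mp hle)
  -- bound for the increasing products on E k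
  have hBint : ∀ k, ∫⁻ x in E k, B x ∂μ ≤ (1 + μ (E k)) * (1 + μ (E k)) := by
    intro k
    have hBn : ∀ n, ∫⁻ x in E k, Bmax n x ∂μ ≤ (1 + μ (E k)) * (1 + μ (E k)) := by
      intro n
      have hrw : ∀ x, Bmax n x
          = ∏ i ∈ Finset.range n, (max (H i x) 1 ^ p i) ^ (1 / p i) := by
        intro x
        rw [hBmax]; dsimp only
        refine Finset.prod_congr rfl fun i _ => ?_
        rw [← ENNReal.rpow_mul, mul_one_div_cancel (hp0 i).ne', ENNReal.rpow_one]
      have hhs := holder_slack (μ.restrict (E k)) n (fun i x => max (H i x) 1 ^ p i)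
        (fun i => ((hHmeas i).max measurable_const).pow_const (p i))
        (fun i => 1 / p i) ht0 (hslt1 n)
      have hres : μ.restrict (E k) Set.univ = μ (E k) := Measure.restrict_apply_univ _
      have hfac : ∀ i, (∫⁻ x in E k, max (H i x) 1 ^ p i ∂μ) ≤ 1 + μ (E k) := by
        intro i
        have hpt : ∀ x, max (H i x) 1 ^ p i ≤ H i x ^ p i + 1 := by
          intro x
          rcases le_total (H i x) 1 with h | h
          · rw [max_eq_right h, ENNReal.one_rpow]
            exact le_add_self
          · rw [max_eq_left h]
            exact le_add_right le_rfl
        calc ∫⁻ x in E k, max (H i x) 1 ^ p i ∂μ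
            ≤ ∫⁻ x in E k, (H i x ^ p i + 1) ∂μ := lintegral_mono hpt
          _ = (∫⁻ x in E k, H i x ^ p i ∂μ) + μ (E k) := by
              rw [lintegral_add_right _ measurable_const]
              simp [hres]
          _ ≤ 1 + μ (E k) := by
              gcongr
              calc ∫⁻ x in E k, H i x ^ p i ∂μ
                  ≤ ∫⁻ x, H i x ^ p i ∂μ := lintegral_mono' Measure.restrict_le_self le_rfl
                _ = 1 := hHnorm i
      have h1 : ∏ i ∈ Finset.range n, (∫⁻ x in E k, max (H i x) 1 ^ p i ∂μ) ^ (1 / p i)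
          ≤ 1 + μ (E k) := by
        calc ∏ i ∈ Finset.range n, (∫⁻ x in E k, max (H i x) 1 ^ p i ∂μ) ^ (1 / p i)
            ≤ ∏ i ∈ Finset.range n, (1 + μ (E k)) ^ (1 / p i) :=
              Finset.prod_le_prod' fun i _ => ENNReal.rpow_le_rpow (hfac i) (ht0 i).le
          _ = (1 + μ (E k)) ^ (s n) := (rpow_prod_range _ (fun i => (ht0 i).le) n).symm
          _ ≤ (1 + μ (E k)) ^ (1 : ℝ) :=
              ENNReal.rpow_le_rpow_of_exponent_le le_self_add (hslt1 n).le
          _ = 1 + μ (E k) := ENNReal.rpow_one _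
      have h2 : (μ (E k)) ^ (1 - s n) ≤ 1 + μ (E k) := by
        rcases le_total (μ (E k)) 1 with h | h
        · exact (ENNReal.rpow_le_one h (by linarith [hslt1 n])).trans le_self_add
        · calc (μ (E k)) ^ (1 - s n) ≤ (μ (E k)) ^ (1 : ℝ) :=
              ENNReal.rpow_le_rpow_of_exponent_le h (by linarith [hsnonneg n])
            _ = μ (E k) := ENNReal.rpow_one _
            _ ≤ 1 + μ (E k) := le_add_self
      calc ∫⁻ x in E k, Bmax n x ∂μ
          = ∫⁻ x in E k, ∏ i ∈ Finset.range n, (max (H i x) 1 ^ p i) ^ (1 / p i) ∂μ := by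
            simp_rw [hrw]
        _ ≤ (∏ i ∈ Finset.range n, (∫⁻ x in E k, max (H i x) 1 ^ p i ∂μ) ^ (1 / p i)) *
              (μ.restrict (E k) Set.univ) ^ (1 - s n) := hhs
        _ ≤ (1 + μ (E k)) * (1 + μ (E k)) := by
            rw [hres]
            exact mul_le_mul' h1 h2
    have hsup : ∫⁻ x in E k, B x ∂μ = ⨆ n, ∫⁻ x in E k, Bmax n x ∂μ := by
      rw [hB]
      exact lintegral_iSup (fun n => hBmaxmeas n) (fun n m hnm x => hBmono x hnm)
    rw [hsup]
    exact iSup_le hBn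
  have hBae : ∀ᵐ x ∂μ, ∀ k, x ∈ E k → B x < ⊤ := by
    rw [ae_all_iff]
    intro k
    have hfin : ∫⁻ x in E k, B x ∂μ ≠ ⊤ := by
      refine (lt_of_le_of_lt (hBint k) ?_).ne
      have h1 : (1 : ℝ≥0∞) + μ (E k) < ⊤ :=
        ENNReal.add_lt_top.mpr ⟨ENNReal.one_lt_top, (hEfin k).lt_top⟩
      exact ENNReal.mul_lt_top h1 h1
    exact (ae_restrict_iff' (hEmeas k)).mp (ae_lt_top hBmeas hfin)
  -- pointwise convergence of the normalized products
  have hHconv : ∀ x, ((∃ i, F i x = 0) ∨ B x < ⊤) →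
      Tendsto (fun n => ∏ i ∈ Finset.range n, H i x) atTop (nhds (A x * B x)) := by
    intro x hx
    rcases hx with ⟨i, hi⟩ | hBfin
    · have hHi : H i x = 0 := by simp [hH, hi, ENNReal.zero_div]
      rw [hAzero x i hi, zero_mul]
      refine Tendsto.congr' ?_ tendsto_const_nhds
      filter_upwards [eventually_ge_atTop (i+1)] with n hn
      exact (Finset.prod_eq_zero (Finset.mem_range.mpr hn) hHi).symm
    · have hAt : Tendsto (fun n => Amin n x) atTop (nhds (A x)) :=
        tendsto_atTop_iInf (hAanti x)
      have hBt : Tendsto (fun n => Bmax n x) atTop (nhds (B x)) :=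
        tendsto_atTop_iSup (hBmono x)
      have := ENNReal.Tendsto.mul hAt (Or.inr hBfin.ne) hBt
        (Or.inr (lt_of_le_of_lt (hAle1 x) ENNReal.one_lt_top).ne)
      exact this.congr fun n => hABprod x n
  have hABne : ∀ x, ((∃ i, F i x = 0) ∨ B x < ⊤) → A x * B x ≠ ⊤ := by
    intro x hx
    rcases hx with ⟨i, hi⟩ | hBfin
    · rw [hAzero x i hi, zero_mul]
      exact ENNReal.zero_ne_top
    · exact ENNReal.mul_ne_top (lt_of_le_of_lt (hAle1 x) ENNReal.one_lt_top).ne hBfin.ne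
  have hFconv : ∀ x, ((∃ i, F i x = 0) ∨ B x < ⊤) →
      Tendsto (fun n => ∏ i ∈ Finset.range n, F i x) atTop (nhds (L * (A x * B x))) := by
    intro x hx
    have := ENNReal.Tendsto.mul hprod (Or.inr (hABne x hx)) (hHconv x hx) (Or.inr hL)
    refine this.congr fun n => ?_
    rw [← Finset.prod_mul_distrib]
    exact Finset.prod_congr rfl fun i _ => (hFeq i x).symm
  have hcond : ∀ x, (∀ k, x ∈ E k → B x < ⊤) → ((∃ i, F i x = 0) ∨ B x < ⊤) := by
    intro x hx
    by_cases h0 : ∃ i, F i x = 0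
    · exact Or.inl h0
    · push_neg at h0
      right
      have hf0 : 0 < f 0 x := by
        by_contra hle
        exact h0 0 (by simp [hF, ENNReal.ofReal_eq_zero.mpr (not_lt.mp hle)])
      obtain ⟨k, hk⟩ := exists_nat_one_div_lt hf0
      exact hx k hk
  -- key integral estimate on each E k
  have hEkint : ∀ k, ∫⁻ x in E k, A x * B x ∂μ ≤ 1 := by
    intro k
    by_cases hμ0 : μ (E k) = 0
    · rw [Measure.restrict_eq_zero.mpr hμ0]
      simp
    have hlim : ∀ᵐ x ∂μ.restrict (E k),
        A x * B x = liminf (fun n => ∏ i ∈ Finset.range n, H i x) atTop := by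
      filter_upwards [ae_restrict_of_ae hBae, ae_restrict_mem (hEmeas k)] with x hx hxE
      exact ((hHconv x (Or.inr (hx k hxE))).liminf_eq).symm
    have hHn_bound : ∀ n, ∫⁻ x in E k, ∏ i ∈ Finset.range n, H i x ∂μ
        ≤ (μ (E k)) ^ (1 - s n) := by
      intro n
      have hrw : ∀ x, (∏ i ∈ Finset.range n, H i x)
          = ∏ i ∈ Finset.range n, (H i x ^ p i) ^ (1 / p i) := by
        intro x
        refine Finset.prod_congr rfl fun i _ => ?_
        rw [← ENNReal.rpow_mul, mul_one_div_cancel (hp0 i).ne', ENNReal.rpow_one]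
      have hhs := holder_slack (μ.restrict (E k)) n (fun i x => H i x ^ p i)
        (fun i => (hHmeas i).pow_const (p i)) (fun i => 1 / p i) ht0 (hslt1 n)
      have hfac : ∏ i ∈ Finset.range n, (∫⁻ x in E k, H i x ^ p i ∂μ) ^ (1 / p i) ≤ 1 := by
        refine Finset.prod_le_one (fun i _ => zero_le) fun i _ => ?_
        refine ENNReal.rpow_le_one ?_ (ht0 i).le
        calc ∫⁻ x in E k, H i x ^ p i ∂μ
            ≤ ∫⁻ x, H i x ^ p i ∂μ := lintegral_mono' Measure.restrict_le_self le_rfl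
          _ = 1 := hHnorm i
      calc ∫⁻ x in E k, ∏ i ∈ Finset.range n, H i x ∂μ
          = ∫⁻ x in E k, ∏ i ∈ Finset.range n, (H i x ^ p i) ^ (1 / p i) ∂μ := by
            simp_rw [hrw]
        _ ≤ (∏ i ∈ Finset.range n, (∫⁻ x in E k, H i x ^ p i ∂μ) ^ (1 / p i)) *
              (μ.restrict (E k) Set.univ) ^ (1 - s n) := hhs
        _ ≤ 1 * (μ (E k)) ^ (1 - s n) := by
            rw [Measure.restrict_apply_univ]
            exact mul_le_mul_left hfac _
        _ = (μ (E k)) ^ (1 - s n) := one_mul _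
    have hlimf : Tendsto (fun n => (μ (E k)) ^ (1 - s n)) atTop (nhds 1) := by
      have hmpos : 0 < (μ (E k)).toReal := ENNReal.toReal_pos hμ0 (hEfin k)
      have h0 : Tendsto (fun n => 1 - s n) atTop (nhds 0) := by
        have := tendsto_const_nhds (x := (1:ℝ)) (f := atTop (α := ℕ)) |>.sub hstend
        simpa using this
      have hcont : Tendsto (fun n => (μ (E k)).toReal ^ (1 - s n)) atTop (nhds 1) := by
        have := (Real.continuousAt_const_rpow hmpos.ne').tendsto.comp h0
        simpa [Real.rpow_zero, Function.comp_def] using this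
      have hof := (ENNReal.continuous_ofReal.tendsto _).comp hcont
      simp only [ENNReal.ofReal_one] at hof
      refine hof.congr fun n => ?_
      show ENNReal.ofReal ((μ (E k)).toReal ^ (1 - s n)) = (μ (E k)) ^ (1 - s n)
      rw [← ENNReal.ofReal_rpow_of_pos hmpos, ENNReal.ofReal_toReal (hEfin k)]
    calc ∫⁻ x in E k, A x * B x ∂μ
        = ∫⁻ x in E k, liminf (fun n => ∏ i ∈ Finset.range n, H i x) atTop ∂μ :=
          lintegral_congr_ae hlim
      _ ≤ liminf (fun n => ∫⁻ x in E k, ∏ i ∈ Finset.range n, H i x ∂μ) atTop :=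
          lintegral_liminf_le fun n => Finset.measurable_prod _ fun i _ => hHmeas i
      _ ≤ liminf (fun n => (μ (E k)) ^ (1 - s n)) atTop :=
          liminf_le_liminf (Eventually.of_forall hHn_bound)
      _ = 1 := hlimf.liminf_eq
  -- assemble the integral bound
  have hABint : ∫⁻ x, A x * B x ∂μ ≤ 1 := by
    have hpt : ∀ x, A x * B x = ⨆ k, (E k).indicator (fun x => A x * B x) x := by
      intro x
      by_cases hx : ∃ k, x ∈ E k
      · obtain ⟨k, hk⟩ := hx
        refine le_antisymm ?_
          (iSup_le fun j => Set.indicator_le_self' (fun _ _ => zero_le) x)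
        refine le_trans ?_ (le_iSup _ k)
        rw [Set.indicator_of_mem hk]
      · push_neg at hx
        have hf0 : f 0 x ≤ 0 := by
          by_contra hlt
          obtain ⟨k, hk⟩ := exists_nat_one_div_lt (not_le.mp hlt)
          exact hx k hk
        have hF0 : F 0 x = 0 := by simp [hF, ENNReal.ofReal_eq_zero.mpr hf0]
        have hz : ∀ k, (E k).indicator (fun x => A x * B x) x = 0 := fun k =>
          Set.indicator_of_notMem (hx k) _
        rw [hAzero x 0 hF0, zero_mul]
        simp [hz]
    calc ∫⁻ x, A x * B x ∂μ
        = ∫⁻ x, ⨆ k, (E k).indicator (fun x => A x * B x) x ∂μ :=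
          lintegral_congr fun x => hpt x
      _ = ⨆ k, ∫⁻ x, (E k).indicator (fun x => A x * B x) x ∂μ :=
          lintegral_iSup (fun k => (hAmeas.mul hBmeas).indicator (hEmeas k))
            (fun a b hab x =>
              Set.indicator_le_indicator_of_subset (hEmono hab) (fun _ => zero_le) x)
      _ = ⨆ k, ∫⁻ x in E k, A x * B x ∂μ := by
          refine iSup_congr fun k => ?_
          rw [lintegral_indicator (hEmeas k)]
      _ ≤ 1 := iSup_le hEkint
  refine ⟨fun x => (L * (A x * B x)).toReal, ?_, ?_⟩
  · filter_upwards [hBae] with x hx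
    have hcx := hcond x hx
    have hGne : L * (A x * B x) ≠ ⊤ := ENNReal.mul_ne_top hL (hABne x hcx)
    have ht := (ENNReal.tendsto_toReal hGne).comp (hFconv x hcx)
    refine ht.congr fun n => ?_
    show (∏ i ∈ Finset.range n, F i x).toReal = ∏ i ∈ Finset.range n, f i x
    rw [hF]; dsimp only
    rw [← ENNReal.ofReal_prod_of_nonneg (fun i _ => hpos i x),
      ENNReal.toReal_ofReal (Finset.prod_nonneg fun i _ => hpos i x)]
  · have hgae : (fun x => ENNReal.ofReal ((L * (A x * B x)).toReal)) =ᵐ[μ]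
        (fun x => L * (A x * B x)) := by
      filter_upwards [hBae] with x hx
      exact ENNReal.ofReal_toReal (ENNReal.mul_ne_top hL (hABne x (hcond x hx)))
    rw [lintegral_congr_ae hgae, lintegral_const_mul L (f := fun x => A x * B x) (hAmeas.mul hBmeas)]
    calc L * ∫⁻ x, A x * B x ∂μ ≤ L * 1 := mul_le_mul_right hABint L
      _ = L := mul_one L
end

section
/- Let (Ω, F, μ) be a measure space, f_i : Ω → [0,∞) measurable for i ∈ ℕ, and 0 < p_i < ∞ with ∑_{i=1}^∞ 1/p_i = 1/p for some p > 0. If ∏_{i=1}^∞ ‖f_i‖_{L^{p_i}} < ∞, then the pointwise product ∏_{i=1}^∞ f_i is well defined almost everywhere and ‖∏_{i=1}^∞ f_i‖_{L^p} ≤ ∏_{i=1}^∞ ‖f_i‖_{L^{p_i}}. -/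
open MeasureTheory Filter
open scoped ENNReal

private lemma log_max_le_rpow_div {t q : ℝ} (ht : 0 ≤ t) (hq : 0 < q) :
    Real.log (max t 1) ≤ t ^ q / q := by
  have h1 : (1:ℝ) ≤ max t 1 := le_max_right _ _
  have h0 : (0:ℝ) < max t 1 := lt_of_lt_of_le one_pos h1
  have hlog : Real.log (max t 1) = Real.log ((max t 1) ^ q) / q := by
    rw [Real.log_rpow h0]; field_simp
  rw [hlog]
  gcongr
  calc Real.log ((max t 1) ^ q) ≤ (max t 1) ^ q - 1 :=
        Real.log_le_sub_one_of_pos (Real.rpow_pos_of_pos h0 q)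
    _ ≤ t ^ q := by
        rcases le_total t 1 with h | h
        · rw [max_eq_right h, Real.one_rpow]
          have : (0:ℝ) ≤ t ^ q := Real.rpow_nonneg ht q
          linarith
        · rw [max_eq_left h]
          have : (0:ℝ) ≤ t ^ q := Real.rpow_nonneg ht q
          linarith

/-- Generalized Hölder inequality with ∑ 1/(p i) = 1/p₀: if each f i is nonnegative
measurable and the infinite product of the norms ‖f i‖_{L^{p i}} converges to a finite
value L, then the pointwise infinite product ∏ f i is well defined a.e. and
‖∏ f i‖_{L^{p₀}} ≤ L = ∏ ‖f i‖_{L^{p i}}. -/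
theorem eLpNorm_prod_le_prod_norm
    {Ω : Type*} [MeasurableSpace Ω] (μ : Measure Ω)
    (p : ℕ → ℝ) (p₀ : ℝ) (hp : ∀ i, 0 < p i) (hp₀ : 0 < p₀)
    (hps : HasSum (fun i => 1 / p i) (1 / p₀))
    (f : ℕ → Ω → ℝ) (hmeas : ∀ i, Measurable (f i)) (hpos : ∀ i x, 0 ≤ f i x)
    (L : ℝ≥0∞) (hL : L ≠ ⊤)
    (hprod : Tendsto
      (fun n => ∏ i ∈ Finset.range n, (∫⁻ x, ENNReal.ofReal (f i x) ^ p i ∂μ) ^ (1 / p i))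
      atTop (nhds L)) :
    ∃ g : Ω → ℝ,
      (∀ᵐ x ∂μ, Tendsto (fun n => ∏ i ∈ Finset.range n, f i x) atTop (nhds (g x))) ∧
      (∫⁻ x, ENNReal.ofReal (g x) ^ p₀ ∂μ) ^ (1 / p₀) ≤ L := by
  set I : ℕ → ℝ≥0∞ := fun i => ∫⁻ x, ENNReal.ofReal (f i x) ^ p i ∂μ with hIdef
  -- Case: some factor is zero a.e.
  by_cases hzero : ∃ i, I i = 0
  · obtain ⟨i₀, h0⟩ := hzero
    have hf0 : ∀ᵐ x ∂μ, f i₀ x = 0 := by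
      have hm : Measurable fun x => ENNReal.ofReal (f i₀ x) ^ p i₀ :=
        (hmeas i₀).ennreal_ofReal.pow_const _
      have := (lintegral_eq_zero_iff hm).1 h0
      filter_upwards [this] with x hx
      simp only [Pi.zero_apply] at hx
      rw [ENNReal.rpow_eq_zero_iff] at hx
      rcases hx with ⟨h1, _⟩ | ⟨h1, h2⟩
      · have := ENNReal.ofReal_eq_zero.1 h1
        exact le_antisymm this (hpos i₀ x)
      · exact absurd h2 (not_lt.2 (hp i₀).le)
    refine ⟨0, ?_, ?_⟩
    · filter_upwards [hf0] with x hx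
      refine Tendsto.congr' ?_ tendsto_const_nhds
      filter_upwards [eventually_ge_atTop (i₀ + 1)] with n hn
      exact (Finset.prod_eq_zero (Finset.mem_range.2 hn) hx).symm
    · simp only [Pi.zero_apply, ENNReal.ofReal_zero, ENNReal.zero_rpow_of_pos hp₀,
        lintegral_zero, ENNReal.zero_rpow_of_pos (by positivity : (0:ℝ) < 1/p₀)]
      exact zero_le
  push_neg at hzero
  -- Case: some factor has infinite integral: contradiction with finiteness of L
  by_cases htop : ∃ i, I i = ⊤
  · exfalso
    obtain ⟨i₀, hT⟩ := htop
    have hPtop : ∀ n ≥ i₀ + 1, (∏ i ∈ Finset.range n, I i ^ (1 / p i)) = ⊤ := by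
      intro n hn
      have hmem : i₀ ∈ Finset.range n := Finset.mem_range.2 hn
      rw [← Finset.prod_erase_mul _ _ hmem, hT,
        ENNReal.top_rpow_of_pos (by have := hp i₀; positivity), ENNReal.mul_top]
      rw [Finset.prod_ne_zero_iff]
      intro i _
      simp only [ne_eq, ENNReal.rpow_eq_zero_iff, not_or, not_and, not_lt]
      exact ⟨fun h => absurd h (hzero i), fun _ => (by have := hp i; positivity)⟩
    have : Tendsto (fun n => ∏ i ∈ Finset.range n, I i ^ (1 / p i)) atTop (nhds ⊤) := by
      refine Tendsto.congr' ?_ tendsto_const_nhds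
      filter_upwards [eventually_ge_atTop (i₀ + 1)] with n hn
      exact (hPtop n hn).symm
    exact hL (tendsto_nhds_unique hprod this)
  push_neg at htop
  -- Main case
  have hrnetop : ∀ i, I i ^ (1 / p i) ≠ ⊤ := fun i =>
    ENNReal.rpow_ne_top_of_nonneg (by have := hp i; positivity) (htop i)
  have hrne0 : ∀ i, I i ^ (1 / p i) ≠ 0 := by
    intro i
    simp only [ne_eq, ENNReal.rpow_eq_zero_iff, not_or, not_and, not_lt]
    exact ⟨fun h => absurd h (hzero i), fun _ => (by have := hp i; positivity)⟩
  set N : ℕ → ℝ := fun i => (I i ^ (1 / p i)).toReal with hNdef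
  have hN0 : ∀ i, 0 < N i := fun i => ENNReal.toReal_pos (hrne0 i) (hrnetop i)
  have hNof : ∀ i, ENNReal.ofReal (N i) = I i ^ (1 / p i) := fun i =>
    ENNReal.ofReal_toReal (hrnetop i)
  have hNp : ∀ i, ENNReal.ofReal (N i) ^ p i = I i := fun i => by
    rw [hNof, ← ENNReal.rpow_mul, one_div, inv_mul_cancel₀ (hp i).ne', ENNReal.rpow_one]
  -- the normalized functions have integral one
  have hgint : ∀ i, ∫⁻ x, ENNReal.ofReal (f i x / N i) ^ p i ∂μ = 1 := by
    intro i
    have hrw : ∀ x, ENNReal.ofReal (f i x / N i) ^ p i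
        = ENNReal.ofReal (f i x) ^ p i * ((ENNReal.ofReal (N i)) ^ p i)⁻¹ := by
      intro x
      rw [div_eq_mul_inv, ENNReal.ofReal_mul (hpos i x), ENNReal.mul_rpow_of_nonneg _ _ (hp i).le,
        ENNReal.ofReal_inv_of_pos (hN0 i), ENNReal.inv_rpow]
    simp_rw [hrw, hNp]
    rw [lintegral_mul_const _ ((hmeas i).ennreal_ofReal.pow_const _)]
    exact ENNReal.mul_inv_cancel (hzero i) (htop i)
  -- a.e. summability of the positive parts of the logs
  set φ : ℕ → Ω → ℝ≥0∞ := fun i x => ENNReal.ofReal (Real.log (max (f i x / N i) 1)) with hφdef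
  have hφmeas : ∀ i, Measurable (φ i) :=
    fun i => (((hmeas i).div_const _).max measurable_const).log.ennreal_ofReal
  have hφle : ∀ i, ∫⁻ x, φ i x ∂μ ≤ ENNReal.ofReal (1 / p i) := by
    intro i
    have hb : ∀ x, φ i x ≤ ENNReal.ofReal (1 / p i) * ENNReal.ofReal (f i x / N i) ^ p i := by
      intro x
      have ht : 0 ≤ f i x / N i := div_nonneg (hpos i x) (hN0 i).le
      calc φ i x ≤ ENNReal.ofReal ((f i x / N i) ^ p i / p i) :=
            ENNReal.ofReal_le_ofReal (log_max_le_rpow_div ht (hp i))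
        _ = ENNReal.ofReal (1 / p i) * ENNReal.ofReal (f i x / N i) ^ p i := by
            rw [div_eq_mul_inv ((f i x / N i) ^ p i), mul_comm, ← one_div,
              ENNReal.ofReal_mul (by have := hp i; positivity), ENNReal.ofReal_rpow_of_nonneg ht (hp i).le]
    calc ∫⁻ x, φ i x ∂μ
        ≤ ∫⁻ x, ENNReal.ofReal (1 / p i) * ENNReal.ofReal (f i x / N i) ^ p i ∂μ :=
          lintegral_mono hb
      _ = ENNReal.ofReal (1 / p i) * 1 := by
          rw [lintegral_const_mul _ (((hmeas i).div_const _).ennreal_ofReal.pow_const _), hgint i]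
      _ = ENNReal.ofReal (1 / p i) := mul_one _
  have hφsum : ∫⁻ x, ∑' i, φ i x ∂μ ≠ ⊤ := by
    rw [lintegral_tsum (fun i => (hφmeas i).aemeasurable)]
    have h1 : ∑' i, ENNReal.ofReal (1 / p i) = ENNReal.ofReal (1 / p₀) := by
      rw [← ENNReal.ofReal_tsum_of_nonneg (fun i => by have := hp i; positivity) hps.summable, hps.tsum_eq]
    exact ne_top_of_le_ne_top (h1 ▸ ENNReal.ofReal_ne_top) (ENNReal.tsum_le_tsum hφle)
  have haes : ∀ᵐ x ∂μ, ∑' i, φ i x ≠ ⊤ := by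
    filter_upwards [ae_lt_top (Measurable.ennreal_tsum hφmeas) hφsum] with x hx using hx.ne
  -- definition of the limit function
  set S : Ω → ℝ := fun x => ∑' i, Real.log (max (f i x / N i) 1) with hSdef
  set V : Ω → ℝ := fun x => ⨅ n, ∏ i ∈ Finset.range n, min (f i x / N i) 1 with hVdef
  set g : Ω → ℝ := fun x => Real.exp (S x) * V x * L.toReal with hgdef
  have hmin_nonneg : ∀ i x, 0 ≤ min (f i x / N i) 1 :=
    fun i x => le_min (div_nonneg (hpos i x) (hN0 i).le) one_pos.le
  have hV0 : ∀ x, 0 ≤ V x :=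
    fun x => le_ciInf fun n => Finset.prod_nonneg fun i _ => hmin_nonneg i x
  have hgnn : ∀ x, 0 ≤ g x := fun x =>
    mul_nonneg (mul_nonneg (Real.exp_pos _).le (hV0 x)) ENNReal.toReal_nonneg
  have hNL : Tendsto (fun n => ∏ i ∈ Finset.range n, N i) atTop (nhds L.toReal) := by
    have : ∀ n, ∏ i ∈ Finset.range n, N i
        = (∏ i ∈ Finset.range n, I i ^ (1 / p i)).toReal := by
      intro n; rw [ENNReal.toReal_prod]
    simp_rw [this]
    exact (ENNReal.tendsto_toReal hL).comp hprod
  -- the a.e. convergence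
  have haeconv : ∀ᵐ x ∂μ, Tendsto (fun n => ∏ i ∈ Finset.range n, f i x) atTop (nhds (g x)) := by
    filter_upwards [haes] with x hx
    have hlog_nonneg : ∀ i, 0 ≤ Real.log (max (f i x / N i) 1) :=
      fun i => Real.log_nonneg (le_max_right _ _)
    have hsummable : Summable fun i => Real.log (max (f i x / N i) 1) := by
      refine (ENNReal.summable_toReal hx).congr fun i => ?_
      simp only [hφdef, ENNReal.toReal_ofReal (hlog_nonneg i)]
    have hU : Tendsto (fun n => ∏ i ∈ Finset.range n, max (f i x / N i) 1) atTop
        (nhds (Real.exp (S x))) := by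
      have h1 : ∀ n, ∏ i ∈ Finset.range n, max (f i x / N i) 1
          = Real.exp (∑ i ∈ Finset.range n, Real.log (max (f i x / N i) 1)) := by
        intro n
        rw [Real.exp_sum]
        exact Finset.prod_congr rfl fun i _ =>
          (Real.exp_log (lt_of_lt_of_le one_pos (le_max_right _ _))).symm
      simp_rw [h1]
      exact (Real.continuous_exp.tendsto _).comp hsummable.hasSum.tendsto_sum_nat
    have hVx : Tendsto (fun n => ∏ i ∈ Finset.range n, min (f i x / N i) 1) atTop
        (nhds (V x)) := by
      refine tendsto_atTop_ciInf ?_ ?_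
      · refine antitone_nat_of_succ_le fun n => ?_
        rw [Finset.prod_range_succ]
        calc (∏ i ∈ Finset.range n, min (f i x / N i) 1) * min (f n x / N n) 1
            ≤ (∏ i ∈ Finset.range n, min (f i x / N i) 1) * 1 := by
              gcongr
              · exact Finset.prod_nonneg fun i _ => hmin_nonneg i x
              · exact min_le_right _ _
          _ = _ := mul_one _
      · exact ⟨0, by rintro _ ⟨n, rfl⟩; exact Finset.prod_nonneg fun i _ => hmin_nonneg i x⟩
    have hG : Tendsto (fun n => ∏ i ∈ Finset.range n, (f i x / N i)) atTop
        (nhds (Real.exp (S x) * V x)) := by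
      have h2 : ∀ n, ∏ i ∈ Finset.range n, (f i x / N i)
          = (∏ i ∈ Finset.range n, max (f i x / N i) 1)
            * ∏ i ∈ Finset.range n, min (f i x / N i) 1 := by
        intro n
        rw [← Finset.prod_mul_distrib]
        exact Finset.prod_congr rfl fun i _ => by rw [max_mul_min, mul_one]
      simp_rw [h2]
      exact hU.mul hVx
    have h3 : ∀ n, ∏ i ∈ Finset.range n, f i x
        = (∏ i ∈ Finset.range n, (f i x / N i)) * ∏ i ∈ Finset.range n, N i := by
      intro n
      rw [← Finset.prod_mul_distrib]
      exact Finset.prod_congr rfl fun i _ => (div_mul_cancel₀ _ (hN0 i).ne').symm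
    simp_rw [h3]
    exact hG.mul hNL
  refine ⟨g, haeconv, ?_⟩
  -- the exponents
  set s : ℕ → ℝ := fun n => ∑ i ∈ Finset.range n, 1 / p i with hsdef
  have hs_pos : ∀ n, 1 ≤ n → 0 < s n := fun n hn =>
    Finset.sum_pos (fun i _ => by have := hp i; positivity) ⟨0, Finset.mem_range.2 hn⟩
  set q : ℕ → ℝ := fun n => (s n)⁻¹ with hqdef
  have hq_nonneg : ∀ n, 0 ≤ q n :=
    fun n => inv_nonneg.2 (Finset.sum_nonneg fun i _ => by have := hp i; positivity)
  have hq_tendsto : Tendsto q atTop (nhds p₀) := by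
    have h1 : Tendsto s atTop (nhds (1 / p₀)) := hps.tendsto_sum_nat
    have h2 := h1.inv₀ (by positivity : (1:ℝ) / p₀ ≠ 0)
    simpa [one_div, inv_inv] using h2
  -- finite Hölder
  have hH : ∀ n, 1 ≤ n → ∫⁻ x, ENNReal.ofReal (∏ i ∈ Finset.range n, f i x) ^ q n ∂μ
      ≤ (∏ i ∈ Finset.range n, I i ^ (1 / p i)) ^ q n := by
    intro n hn
    have hqs : ∑ i ∈ Finset.range n, q n * (1 / p i) = 1 := by
      rw [← Finset.mul_sum]
      exact inv_mul_cancel₀ (hs_pos n hn).ne'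
    have hrw : ∀ x, ENNReal.ofReal (∏ i ∈ Finset.range n, f i x) ^ q n
        = ∏ i ∈ Finset.range n, (ENNReal.ofReal (f i x) ^ p i) ^ (q n * (1 / p i)) := by
      intro x
      rw [ENNReal.ofReal_prod_of_nonneg (fun i _ => hpos i x),
        ← ENNReal.prod_rpow_of_nonneg (hq_nonneg n)]
      refine Finset.prod_congr rfl fun i _ => ?_
      rw [← ENNReal.rpow_mul]
      congr 1
      field_simp [(hp i).ne']
    simp_rw [hrw]
    calc ∫⁻ x, ∏ i ∈ Finset.range n, (ENNReal.ofReal (f i x) ^ p i) ^ (q n * (1 / p i)) ∂μ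
        ≤ ∏ i ∈ Finset.range n, (∫⁻ x, ENNReal.ofReal (f i x) ^ p i ∂μ) ^ (q n * (1 / p i)) :=
          ENNReal.lintegral_prod_norm_pow_le _
            (fun i _ => ((hmeas i).ennreal_ofReal.pow_const _).aemeasurable) hqs
            (fun i _ => mul_nonneg (hq_nonneg n) (by have := hp i; positivity))
      _ = (∏ i ∈ Finset.range n, I i ^ (1 / p i)) ^ q n := by
          rw [← ENNReal.prod_rpow_of_nonneg (hq_nonneg n)]
          refine Finset.prod_congr rfl fun i _ => ?_
          rw [← ENNReal.rpow_mul]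
          congr 1
          ring
  -- pointwise convergence of the integrands
  have hFmeas : ∀ n, Measurable fun x => ENNReal.ofReal (∏ i ∈ Finset.range n, f i x) ^ q n :=
    fun n => ((Finset.measurable_prod _ fun i _ => hmeas i).ennreal_ofReal).pow_const _
  have hptw : ∀ᵐ x ∂μ, Tendsto (fun n => ENNReal.ofReal (∏ i ∈ Finset.range n, f i x) ^ q n)
      atTop (nhds (ENNReal.ofReal (g x) ^ p₀)) := by
    filter_upwards [haeconv] with x hx
    have hFnn : ∀ n, 0 ≤ ∏ i ∈ Finset.range n, f i x :=
      fun n => Finset.prod_nonneg fun i _ => hpos i x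
    have h1 : Tendsto (fun n => (∏ i ∈ Finset.range n, f i x) ^ q n) atTop (nhds (g x ^ p₀)) :=
      hx.rpow hq_tendsto (Or.inr hp₀)
    have h2 := (ENNReal.continuous_ofReal.tendsto _).comp h1
    rw [show ENNReal.ofReal (g x) ^ p₀ = ENNReal.ofReal (g x ^ p₀) from
      ENNReal.ofReal_rpow_of_nonneg (hgnn x) hp₀.le]
    exact h2.congr fun n =>
      (ENNReal.ofReal_rpow_of_nonneg (hFnn n) (hq_nonneg n)).symm
  -- Fatou
  have hfatou : ∫⁻ x, ENNReal.ofReal (g x) ^ p₀ ∂μ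
      ≤ liminf (fun n => ∫⁻ x, ENNReal.ofReal (∏ i ∈ Finset.range n, f i x) ^ q n ∂μ) atTop := by
    calc ∫⁻ x, ENNReal.ofReal (g x) ^ p₀ ∂μ
        = ∫⁻ x, liminf (fun n => ENNReal.ofReal (∏ i ∈ Finset.range n, f i x) ^ q n) atTop ∂μ := by
          refine lintegral_congr_ae ?_
          filter_upwards [hptw] with x hx
          exact hx.liminf_eq.symm
      _ ≤ _ := lintegral_liminf_le hFmeas
  -- limit of the right-hand sides
  have hPlim : Tendsto (fun n => (∏ i ∈ Finset.range n, I i ^ (1 / p i)) ^ q n) atTop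
      (nhds (L ^ p₀)) := by
    have hPfin : ∀ n, (∏ i ∈ Finset.range n, I i ^ (1 / p i)) ≠ ⊤ :=
      fun n => (ENNReal.prod_lt_top fun i _ => (hrnetop i).lt_top).ne
    have h1 : Tendsto (fun n => (∏ i ∈ Finset.range n, I i ^ (1 / p i)).toReal ^ q n) atTop
        (nhds (L.toReal ^ p₀)) :=
      ((ENNReal.tendsto_toReal hL).comp hprod).rpow hq_tendsto (Or.inr hp₀)
    have h2 := (ENNReal.continuous_ofReal.tendsto _).comp h1
    have h3 : ENNReal.ofReal (L.toReal ^ p₀) = L ^ p₀ := by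
      rw [← ENNReal.ofReal_rpow_of_nonneg ENNReal.toReal_nonneg hp₀.le,
        ENNReal.ofReal_toReal hL]
    rw [← h3]
    refine h2.congr fun n => ?_
    show ENNReal.ofReal ((∏ i ∈ Finset.range n, I i ^ (1 / p i)).toReal ^ q n)
      = (∏ i ∈ Finset.range n, I i ^ (1 / p i)) ^ q n
    rw [← ENNReal.ofReal_rpow_of_nonneg ENNReal.toReal_nonneg (hq_nonneg n),
      ENNReal.ofReal_toReal (hPfin n)]
  have hliminf : liminf
      (fun n => ∫⁻ x, ENNReal.ofReal (∏ i ∈ Finset.range n, f i x) ^ q n ∂μ) atTop ≤ L ^ p₀ := by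
    rw [← hPlim.liminf_eq]
    refine liminf_le_liminf ?_
    filter_upwards [eventually_ge_atTop 1] with n hn using hH n hn
  have hfinal : ∫⁻ x, ENNReal.ofReal (g x) ^ p₀ ∂μ ≤ L ^ p₀ := hfatou.trans hliminf
  calc (∫⁻ x, ENNReal.ofReal (g x) ^ p₀ ∂μ) ^ (1 / p₀) ≤ (L ^ p₀) ^ (1 / p₀) :=
        ENNReal.rpow_le_rpow hfinal (by positivity)
    _ = L := by rw [← ENNReal.rpow_mul, mul_one_div, div_self hp₀.ne', ENNReal.rpow_one]
end

section
/- Let (Ω, F, μ) be a complete probability space with filtration (F_n), weights ω_i with σ_i = ω_i^{-1/(p_i-1)} ∈ L^1, exponents 1 < p_i < ∞ with ∑ 1/p_i = 1/p, and nonnegative f_i with ∏_{i=1}^∞ ‖f_i‖_{L^{p_i}(ω_i)} < ∞. If additionally ∏_{i=1}^∞ E_n(ω_i^{1-p'_i})^{1/p'_i} < ∞ a.e. for each n, then ∏_{i=1}^∞ E_n(f_i) ≤ (∏_{i=1}^∞ E_n(f_i^{p_i} ω_i)^{1/p_i}) · (∏_{i=1}^∞ E_n(ω_i^{1-p'_i})^{1/p'_i})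 < ∞ almost everywhere. -/
open MeasureTheory Filter
open scoped ENNReal NNReal

noncomputable section

/-- Limit of partial products in ℝ≥0∞ (via limsup; equals the limit when it exists). -/
def prodLim (a : ℕ → ℝ≥0∞) : ℝ≥0∞ :=
  Filter.limsup (fun k => ∏ i ∈ Finset.range k, a i) Filter.atTop

/-- Convergence of an infinite product in ℝ≥0∞. -/
def HasProdLim (a : ℕ → ℝ≥0∞) (L : ℝ≥0∞) : Prop :=
  Filter.Tendsto (fun k => ∏ i ∈ Finset.range k, a i) Filter.atTop (nhds L)

variable {Ω : Type*}

/-- Weighted L^q norm ‖f‖_{L^q(w)} = (∫ f^q w dμ)^{1/q}. -/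
def wNorm {m : MeasurableSpace Ω} (μ : Measure Ω) (f : Ω → ℝ) (q : ℝ) (w : Ω → ℝ) : ℝ≥0∞ :=
  (∫⁻ x, ENNReal.ofReal (f x) ^ q * ENNReal.ofReal (w x) ∂μ) ^ (1 / q)

/-- Conjugate exponent q' = q/(q-1). -/
def conjExp (q : ℝ) : ℝ := q / (q - 1)

/-- σ = w^{1-q'} = w^{-1/(q-1)}. -/
def sigmaW (w : Ω → ℝ) (q : ℝ) : Ω → ℝ := fun x => w x ^ (-(1 / (q - 1)))

/-- Generalized Doob maximal operator 𝔐(f⃗) = sup_n ∏ᵢ E(f i | ℱ n). -/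
def doobM {m0 : MeasurableSpace Ω} (μ : Measure Ω) (ℱ : Filtration ℕ m0)
    (f : ℕ → Ω → ℝ) (x : Ω) : ℝ≥0∞ :=
  ⨆ n, prodLim fun i => ENNReal.ofReal ((μ[f i|ℱ n]) x)

/-- ℕ∞-valued stopping time with respect to the filtration ℱ. -/
def IsStopT {m0 : MeasurableSpace Ω} (ℱ : Filtration ℕ m0) (τ : Ω → ℕ∞) : Prop :=
  ∀ n : ℕ, MeasurableSet[ℱ n] {x | τ x ≤ (n : ℕ∞)}

/-- E_τ(f), relevant on {τ < ∞} (junk value, via `toNat`, elsewhere). -/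
def stopCE {m0 : MeasurableSpace Ω} (μ : Measure Ω) (ℱ : Filtration ℕ m0) (f : Ω → ℝ)
    (τ : Ω → ℕ∞) (x : Ω) : ℝ := (μ[f|ℱ (τ x).toNat]) x

/-- Weighted weak-L^q norm ‖g‖_{L^{q,∞}(v)} = sup_λ λ |{g > λ}|_v^{1/q}. -/
def wkNorm {m : MeasurableSpace Ω} (μ : Measure Ω) (g : Ω → ℝ≥0∞) (q : ℝ) (v : Ω → ℝ) : ℝ≥0∞ :=
  ⨆ lam : ℝ≥0, (lam : ℝ≥0∞) *
    (∫⁻ x in {x | (lam : ℝ≥0∞) < g x}, ENNReal.ofReal (v x) ∂μ) ^ (1 / q)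

/-- Admissibility of f⃗: each f i nonnegative measurable with f i ∈ L^{p i}(ω i), and
∏ᵢ ‖f i‖_{L^{p i}(ω i)} convergent with finite value Lf. -/
def Adm {m : MeasurableSpace Ω} (μ : Measure Ω) (p : ℕ → ℝ) (ω : ℕ → Ω → ℝ)
    (f : ℕ → Ω → ℝ) (Lf : ℝ≥0∞) : Prop :=
  (∀ i, Measurable (f i)) ∧ (∀ i x, 0 ≤ f i x) ∧ (∀ i, wNorm μ (f i) (p i) (ω i) ≠ ⊤) ∧
    Lf ≠ ⊤ ∧ HasProdLim (fun i => wNorm μ (f i) (p i) (ω i)) Lf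

/-- The testing inequality: for all stopping times τ and admissible f⃗,
(∫_{τ<∞} ∏ᵢ E_τ(f i)^{p₀} v dμ)^{1/p₀} ≤ C ∏ᵢ ‖f i‖_{L^{p i}(ω i)}. -/
def TestIneq {m0 : MeasurableSpace Ω} (μ : Measure Ω) (ℱ : Filtration ℕ m0)
    (p : ℕ → ℝ) (p₀ : ℝ) (v : Ω → ℝ) (ω : ℕ → Ω → ℝ) (C : ℝ≥0∞) : Prop :=
  ∀ τ : Ω → ℕ∞, IsStopT ℱ τ → ∀ f Lf, Adm μ p ω f Lf →
    (∫⁻ x in {x | τ x ≠ ⊤},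
        (prodLim fun i => ENNReal.ofReal (stopCE μ ℱ (f i) τ x)) ^ p₀ *
          ENNReal.ofReal (v x) ∂μ) ^ (1 / p₀) ≤ C * Lf

/-- The weak-type inequality ‖𝔐(f⃗)‖_{L^{p₀,∞}(v)} ≤ C ∏ᵢ ‖f i‖_{L^{p i}(ω i)}. -/
def WeakIneq {m0 : MeasurableSpace Ω} (μ : Measure Ω) (ℱ : Filtration ℕ m0)
    (p : ℕ → ℝ) (p₀ : ℝ) (v : Ω → ℝ) (ω : ℕ → Ω → ℝ) (C : ℝ≥0∞) : Prop :=
  ∀ f Lf, Adm μ p ω f Lf → wkNorm μ (doobM μ ℱ f) p₀ v ≤ C * Lf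

/-- The strong-type inequality ‖𝔐(f⃗)‖_{L^{p₀}(v)} ≤ C ∏ᵢ ‖f i‖_{L^{p i}(ω i)}. -/
def StrongIneq {m0 : MeasurableSpace Ω} (μ : Measure Ω) (ℱ : Filtration ℕ m0)
    (p : ℕ → ℝ) (p₀ : ℝ) (v : Ω → ℝ) (ω : ℕ → Ω → ℝ) (C : ℝ≥0∞) : Prop :=
  ∀ f Lf, Adm μ p ω f Lf →
    (∫⁻ x, doobM μ ℱ f x ^ p₀ * ENNReal.ofReal (v x) ∂μ) ^ (1 / p₀) ≤ C * Lf

/-- The A_{p⃗} condition: E_n(v)^{1/p₀} ∏ᵢ E_n(ω i^{1-p i'})^{1/p i'} ≤ C for all n. -/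
def ApCond {m0 : MeasurableSpace Ω} (μ : Measure Ω) (ℱ : Filtration ℕ m0)
    (p : ℕ → ℝ) (p₀ : ℝ) (v : Ω → ℝ) (ω : ℕ → Ω → ℝ) (C : ℝ≥0∞) : Prop :=
  ∀ n : ℕ, ∀ᵐ x ∂μ,
    ENNReal.ofReal ((μ[v|ℱ n]) x) ^ (1 / p₀) *
      prodLim (fun i =>
        ENNReal.ofReal ((μ[sigmaW (ω i) (p i)|ℱ n]) x) ^ (1 / conjExp (p i))) ≤ C

/-- The reverse Hölder condition RH_{p⃗}:
∏ᵢ (∫_{τ<∞} σ i dμ)^{p₀/p i} ≤ C ∫_{τ<∞} ∏ᵢ (σ i)^{p₀/p i} dμ for all stopping times τ. -/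
def RHCond {m0 : MeasurableSpace Ω} (μ : Measure Ω) (ℱ : Filtration ℕ m0)
    (p : ℕ → ℝ) (p₀ : ℝ) (ω : ℕ → Ω → ℝ) (C : ℝ≥0∞) : Prop :=
  ∀ τ : Ω → ℕ∞, IsStopT ℱ τ →
    prodLim (fun i =>
        (∫⁻ x in {x | τ x ≠ ⊤}, ENNReal.ofReal (sigmaW (ω i) (p i) x) ∂μ) ^ (p₀ / p i))
      ≤ C * ∫⁻ x in {x | τ x ≠ ⊤},
          prodLim (fun i => ENNReal.ofReal (sigmaW (ω i) (p i) x) ^ (p₀ / p i)) ∂μ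

/-- The testing condition S_{p⃗}:
(∫_{τ<∞} 𝔐(σ⃗ χ_{τ<∞})^{p₀} v dμ)^{1/p₀} ≤ C ∏ᵢ |{τ<∞}|_{σ i}^{1/p i}. -/
def SpCond {m0 : MeasurableSpace Ω} (μ : Measure Ω) (ℱ : Filtration ℕ m0)
    (p : ℕ → ℝ) (p₀ : ℝ) (v : Ω → ℝ) (ω : ℕ → Ω → ℝ) (C : ℝ≥0∞) : Prop :=
  ∀ τ : Ω → ℕ∞, IsStopT ℱ τ →
    (∫⁻ x in {x | τ x ≠ ⊤},
        doobM μ ℱ (fun i => Set.indicator {y | τ y ≠ ⊤} (sigmaW (ω i) (p i))) x ^ p₀ *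
          ENNReal.ofReal (v x) ∂μ) ^ (1 / p₀)
      ≤ C * prodLim (fun i =>
          (∫⁻ x in {x | τ x ≠ ⊤}, ENNReal.ofReal (sigmaW (ω i) (p i) x) ∂μ) ^ (1 / p i))

/-- The standing assumptions of Section 3 of the paper. -/
structure Standing {m0 : MeasurableSpace Ω} (μ : Measure Ω) (ℱ : Filtration ℕ m0)
    (p : ℕ → ℝ) (p₀ : ℝ) (v : Ω → ℝ) (ω : ℕ → Ω → ℝ) : Prop where
  hgen : (⨆ n, (ℱ n : MeasurableSpace Ω)) = m0
  hp : ∀ i, 1 < p i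
  hp₀ : 0 < p₀
  hps : HasSum (fun i => 1 / p i) (1 / p₀)
  hv : Measurable v
  hvpos : ∀ x, 0 < v x
  hvint : Integrable v μ
  hω : ∀ i, Measurable (ω i)
  hωpos : ∀ i x, 0 < ω i x
  hωint : ∀ i, Integrable (ω i) μ
  hσint : ∀ i, Integrable (sigmaW (ω i) (p i)) μ
  hσnorm : ∃ Lσ : ℝ≥0∞, Lσ ≠ ⊤ ∧
    HasProdLim (fun i => wNorm μ (sigmaW (ω i) (p i)) (p i) (ω i)) Lσ
  hEσ : ∀ n : ℕ, ∀ᵐ x ∂μ,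
    prodLim (fun i =>
      ENNReal.ofReal ((μ[sigmaW (ω i) (p i)|ℱ n]) x) ^ (1 / conjExp (p i))) ≠ ⊤
  hσpos : ∀ᵐ x ∂μ,
    0 < prodLim (fun i => ENNReal.ofReal (sigmaW (ω i) (p i) x) ^ (1 / p i))

private lemma young_opt {q q' A B E : ℝ} (hpq : q.HolderConjugate q') (hA : 0 ≤ A) (hB : 0 ≤ B)
    (hE : ∀ lam : ℚ, 0 < lam →
      E ≤ ((lam : ℝ) ^ q / q) * A + ((lam : ℝ) ^ (-q') / q') * B) :
    E ≤ A ^ (1/q) * B ^ (1/q') := by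
  have hq : 0 < q := hpq.pos
  have hq' : 0 < q' := hpq.symm.pos
  -- extend to all real lam > 0 by density/continuity
  have hmain : ∀ lam : ℝ, 0 < lam →
      E ≤ (lam ^ q / q) * A + (lam ^ (-q') / q') * B := by
    intro lam hlam
    have hex : ∀ m : ℕ, ∃ r : ℚ, lam < (r : ℝ) ∧ (r : ℝ) < lam + 1/(m+1) := by
      intro m
      exact exists_rat_btwn (lt_add_of_pos_right lam (by positivity))
    choose u hu1 hu2 using hex
    have hut : Tendsto (fun m : ℕ => ((u m : ℚ) : ℝ)) atTop (nhds lam) := by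
      have h0 : Tendsto (fun m : ℕ => lam + 1/(m+1 : ℝ)) atTop (nhds lam) := by
        have : Tendsto (fun n : ℕ => 1 / ((n : ℝ) + 1)) atTop (nhds 0) :=
          tendsto_one_div_add_atTop_nhds_zero_nat
        simpa using tendsto_const_nhds.add this
      exact tendsto_of_tendsto_of_tendsto_of_le_of_le tendsto_const_nhds h0
        (fun m => (hu1 m).le) (fun m => (hu2 m).le)
    have hcont : ContinuousAt (fun l : ℝ => (l ^ q / q) * A + (l ^ (-q') / q') * B) lam := by
      have c1 : ContinuousAt (fun l : ℝ => l ^ q) lam :=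
        Real.continuousAt_rpow_const lam q (Or.inl hlam.ne')
      have c2 : ContinuousAt (fun l : ℝ => l ^ (-q')) lam :=
        Real.continuousAt_rpow_const lam (-q') (Or.inl hlam.ne')
      exact ((c1.div_const q).mul continuousAt_const).add ((c2.div_const q').mul continuousAt_const)
    refine ge_of_tendsto (hcont.tendsto.comp hut) ?_
    refine Eventually.of_forall fun m => ?_
    have hpos : (0 : ℚ) < u m := by
      have : (0:ℝ) < (u m : ℝ) := hlam.trans (hu1 m)
      exact_mod_cast this
    exact hE (u m) hpos
  -- with epsilon of room
  have key : ∀ ε : ℝ, 0 < ε → E ≤ (A + ε) ^ (1/q) * (B + ε) ^ (1/q') := by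
    intro ε hε
    set A' := A + ε with hA'def
    set B' := B + ε with hB'def
    have hA' : 0 < A' := by positivity
    have hB' : 0 < B' := by positivity
    set lam := (B'/A') ^ (1/(q+q')) with hlamdef
    have hlam : 0 < lam := Real.rpow_pos_of_pos (div_pos hB' hA') _
    have hqq' : q + q' = q * q' := hpq.mul_eq_add.symm
    have hinv : q⁻¹ + q'⁻¹ = 1 := hpq.inv_add_inv_eq_one
    have hexp1 : 1 - 1/q' = 1/q := by rw [one_div, one_div]; linarith
    have hexp2 : 1 - 1/q = 1/q' := by rw [one_div, one_div]; linarith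
    have e1 : lam ^ q = (B'/A') ^ (1/q') := by
      rw [hlamdef, ← Real.rpow_mul (div_pos hB' hA').le]
      congr 1
      rw [hqq']
      field_simp
    have e2 : lam ^ (-q') = (A'/B') ^ (1/q) := by
      rw [hlamdef, ← Real.rpow_mul (div_pos hB' hA').le]
      rw [show (1/(q+q')) * (-q') = -(1/q) by rw [hqq']; field_simp]
      rw [Real.rpow_neg (div_pos hB' hA').le, ← Real.inv_rpow (div_pos hB' hA').le, inv_div]
    have hsubA : A' ^ (1 - 1/q') = A' / A' ^ (1/q') := by
      rw [Real.rpow_sub hA', Real.rpow_one]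
    have hsubB : B' ^ (1 - 1/q) = B' / B' ^ (1/q) := by
      rw [Real.rpow_sub hB', Real.rpow_one]
    have e1' : lam ^ q * A' = A' ^ (1/q) * B' ^ (1/q') := by
      calc lam ^ q * A' = B' ^ (1/q') / A' ^ (1/q') * A' := by
            rw [e1, Real.div_rpow hB'.le hA'.le]
        _ = B' ^ (1/q') * (A' / A' ^ (1/q')) := by ring
        _ = A' ^ (1/q) * B' ^ (1/q') := by rw [← hsubA, hexp1]; ring
    have e2' : lam ^ (-q') * B' = A' ^ (1/q) * B' ^ (1/q') := by
      calc lam ^ (-q') * B' = A' ^ (1/q) / B' ^ (1/q) * B' := by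
            rw [e2, Real.div_rpow hA'.le hB'.le]
        _ = A' ^ (1/q) * (B' / B' ^ (1/q)) := by ring
        _ = A' ^ (1/q) * B' ^ (1/q') := by rw [← hsubB, hexp2]
    have step1 : E ≤ (lam ^ q / q) * A' + (lam ^ (-q') / q') * B' := by
      refine (hmain lam hlam).trans ?_
      have h1 : (lam ^ q / q) * A ≤ (lam ^ q / q) * A' := by
        apply mul_le_mul_of_nonneg_left (le_add_of_nonneg_right hε.le)
        positivity
      have h2 : (lam ^ (-q') / q') * B ≤ (lam ^ (-q') / q') * B' := by
        apply mul_le_mul_of_nonneg_left (le_add_of_nonneg_right hε.le)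
        positivity
      exact add_le_add h1 h2
    refine step1.trans_eq ?_
    have : (lam ^ q / q) * A' + (lam ^ (-q') / q') * B'
        = (lam ^ q * A') * q⁻¹ + (lam ^ (-q') * B') * q'⁻¹ := by ring
    rw [this, e1', e2', ← mul_add, hinv, mul_one]
  -- let ε → 0
  have htend : Tendsto (fun m : ℕ => (A + 1/(m+1)) ^ (1/q) * (B + 1/(m+1)) ^ (1/q'))
      atTop (nhds (A ^ (1/q) * B ^ (1/q'))) := by
    have h0 : Tendsto (fun m : ℕ => 1/(m+1 : ℝ)) atTop (nhds 0) :=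
      tendsto_one_div_add_atTop_nhds_zero_nat
    have hca : ContinuousAt (fun t : ℝ => (A + t) ^ (1/q) * (B + t) ^ (1/q')) 0 := by
      have c1 : ContinuousAt (fun t : ℝ => (A + t) ^ (1/q)) 0 := by
        have hr : ContinuousAt (fun s : ℝ => s ^ (1/q)) (A + 0) :=
          Real.continuousAt_rpow_const _ _ (Or.inr (by positivity))
        exact hr.comp ((continuous_const.add continuous_id).continuousAt)
      have c2 : ContinuousAt (fun t : ℝ => (B + t) ^ (1/q')) 0 := by
        have hr : ContinuousAt (fun s : ℝ => s ^ (1/q')) (B + 0) :=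
          Real.continuousAt_rpow_const _ _ (Or.inr (by positivity))
        exact hr.comp ((continuous_const.add continuous_id).continuousAt)
      exact c1.mul c2
    have := hca.tendsto.comp h0
    simpa [Function.comp_def] using this
  refine ge_of_tendsto htend ?_
  exact Eventually.of_forall fun m => key (1/(m+1)) (by positivity)

private lemma condexp_holder {m0 : MeasurableSpace Ω} (μ : Measure Ω) [IsProbabilityMeasure μ]
    {m : MeasurableSpace Ω} (hm : m ≤ m0) {q : ℝ} (hq : 1 < q)
    {f w : Ω → ℝ} (hf0 : ∀ x, 0 ≤ f x) (hw0 : ∀ x, 0 < w x)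
    (hσ : Integrable (sigmaW w q) μ) (hg : Integrable (fun y => f y ^ q * w y) μ)
    (hfi : Integrable f μ) :
    ∀ᵐ x ∂μ, ENNReal.ofReal ((μ[f|m]) x) ≤
      ENNReal.ofReal ((μ[(fun y => f y ^ q * w y)|m]) x) ^ (1/q) *
      ENNReal.ofReal ((μ[sigmaW w q|m]) x) ^ (1 / conjExp q) := by
  set q' := conjExp q with hq'def
  have hpq : q.HolderConjugate q' := Real.HolderConjugate.conjExponent hq
  have hqpos : 0 < q := hpq.pos
  have hq'pos : 0 < q' := hpq.symm.pos
  set g := fun y => f y ^ q * w y with hgdef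
  have hg0 : ∀ x, 0 ≤ g x := fun x => mul_nonneg (Real.rpow_nonneg (hf0 x) q) (hw0 x).le
  have hσ0 : ∀ x, 0 ≤ sigmaW w q x := fun x => Real.rpow_nonneg (hw0 x).le _
  -- pointwise Young inequality
  have hYoung : ∀ lam : ℚ, 0 < lam → ∀ x,
      f x ≤ (((lam:ℝ) ^ q / q)) * g x + (((lam:ℝ) ^ (-q') / q')) * sigmaW w q x := by
    intro lam hlam x
    set l : ℝ := (lam : ℝ) with hldef
    have hl : 0 < l := by rw [hldef]; exact_mod_cast hlam
    have hwx := hw0 x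
    have hfx := hf0 x
    have hid : f x = (f x * w x ^ (1/q) * l) * (w x ^ (-(1/q)) * l⁻¹) := by
      have h1 : w x ^ (1/q) * w x ^ (-(1/q)) = 1 := by
        rw [← Real.rpow_add hwx, add_neg_cancel, Real.rpow_zero]
      have h2 : l * l⁻¹ = 1 := mul_inv_cancel₀ hl.ne'
      calc f x = f x * (w x ^ (1/q) * w x ^ (-(1/q))) * (l * l⁻¹) := by rw [h1, h2]; ring
        _ = (f x * w x ^ (1/q) * l) * (w x ^ (-(1/q)) * l⁻¹) := by ring
    have ha : 0 ≤ f x * w x ^ (1/q) * l :=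
      mul_nonneg (mul_nonneg hfx (Real.rpow_nonneg hwx.le _)) hl.le
    have hb : 0 ≤ w x ^ (-(1/q)) * l⁻¹ :=
      mul_nonneg (Real.rpow_nonneg hwx.le _) (inv_nonneg.2 hl.le)
    have hY := Real.young_inequality_of_nonneg ha hb hpq
    rw [← hid] at hY
    have hau : (f x * w x ^ (1/q) * l) ^ q = f x ^ q * w x * l ^ q := by
      rw [Real.mul_rpow (mul_nonneg hfx (Real.rpow_nonneg hwx.le _)) hl.le,
        Real.mul_rpow hfx (Real.rpow_nonneg hwx.le _),
        ← Real.rpow_mul hwx.le, one_div_mul_cancel hqpos.ne', Real.rpow_one]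
    have hbu : (w x ^ (-(1/q)) * l⁻¹) ^ q' = sigmaW w q x * l ^ (-q') := by
      rw [Real.mul_rpow (Real.rpow_nonneg hwx.le _) (inv_nonneg.2 hl.le),
        ← Real.rpow_mul hwx.le, Real.inv_rpow hl.le, ← Real.rpow_neg hl.le]
      congr 2
      show -(1/q) * q' = -(1/(q-1))
      rw [hq'def]
      unfold conjExp
      field_simp
    rw [hau, hbu] at hY
    refine hY.trans_eq ?_
    ring
  -- conditional expectation of the Young inequality, for each rational lam
  have hce : ∀ lam : ℚ, 0 < lam → ∀ᵐ x ∂μ,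
      (μ[f|m]) x ≤ ((lam:ℝ) ^ q / q) * (μ[g|m]) x + ((lam:ℝ) ^ (-q') / q') * (μ[sigmaW w q|m]) x := by
    intro lam hlam
    set c1 : ℝ := (lam:ℝ) ^ q / q
    set c2 : ℝ := (lam:ℝ) ^ (-q') / q'
    have hint : Integrable (fun x => c1 * g x + c2 * sigmaW w q x) μ :=
      (hg.const_mul c1).add (hσ.const_mul c2)
    have h1 : μ[f|m] ≤ᵐ[μ] μ[(fun x => c1 * g x + c2 * sigmaW w q x)|m] :=
      condExp_mono hfi hint (Eventually.of_forall fun x => hYoung lam hlam x)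
    have h2 : μ[(fun x => c1 * g x + c2 * sigmaW w q x)|m]
        =ᵐ[μ] fun x => c1 * (μ[g|m]) x + c2 * (μ[sigmaW w q|m]) x := by
      have ha : μ[(fun x => c1 * g x + c2 * sigmaW w q x)|m]
          =ᵐ[μ] μ[(fun x => c1 * g x)|m] + μ[(fun x => c2 * sigmaW w q x)|m] :=
        condExp_add (hg.const_mul c1) (hσ.const_mul c2) m
      have hb : μ[(fun x => c1 * g x)|m] =ᵐ[μ] c1 • μ[g|m] := by
        have := condExp_smul (μ := μ) (m := m) c1 g
        simpa [smul_eq_mul, Pi.smul_def] using this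
      have hc : μ[(fun x => c2 * sigmaW w q x)|m] =ᵐ[μ] c2 • μ[sigmaW w q|m] := by
        have := condExp_smul (μ := μ) (m := m) c2 (sigmaW w q)
        simpa [smul_eq_mul, Pi.smul_def] using this
      filter_upwards [ha, hb, hc] with x hxa hxb hxc
      simp only [Pi.add_apply] at hxa
      rw [hxa, hxb, hxc]
      simp [smul_eq_mul]
    filter_upwards [h1, h2] with x hx1 hx2
    exact hx1.trans (le_of_eq hx2)
  have hgn : 0 ≤ᵐ[μ] μ[g|m] := condExp_nonneg (Eventually.of_forall hg0)
  have hσn : 0 ≤ᵐ[μ] μ[sigmaW w q|m] := condExp_nonneg (Eventually.of_forall hσ0)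
  have hall : ∀ᵐ x ∂μ, ∀ lam : ℚ, 0 < lam →
      (μ[f|m]) x ≤ ((lam:ℝ) ^ q / q) * (μ[g|m]) x + ((lam:ℝ) ^ (-q') / q') * (μ[sigmaW w q|m]) x := by
    rw [ae_all_iff]
    intro lam
    by_cases hlam : 0 < lam
    · filter_upwards [hce lam hlam] with x hx _ using hx
    · filter_upwards with x hl using absurd hl hlam
  filter_upwards [hall, hgn, hσn] with x hx hgx hσx
  have hopt : (μ[f|m]) x ≤ ((μ[g|m]) x) ^ (1/q) * ((μ[sigmaW w q|m]) x) ^ (1/q') :=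
    young_opt hpq hgx hσx (fun lam hlam => hx lam hlam)
  calc ENNReal.ofReal ((μ[f|m]) x)
      ≤ ENNReal.ofReal (((μ[g|m]) x) ^ (1/q) * ((μ[sigmaW w q|m]) x) ^ (1/q')) :=
        ENNReal.ofReal_le_ofReal hopt
    _ = ENNReal.ofReal ((μ[g|m]) x) ^ (1/q) * ENNReal.ofReal ((μ[sigmaW w q|m]) x) ^ (1/q') := by
        rw [ENNReal.ofReal_mul (Real.rpow_nonneg hgx _),
          ENNReal.ofReal_rpow_of_nonneg hgx (by positivity),
          ENNReal.ofReal_rpow_of_nonneg hσx (by positivity)]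

private lemma amgm_real (k : ℕ) (w z : ℕ → ℝ) (hw : ∀ i, 0 ≤ w i)
    (hw' : ∑ i ∈ Finset.range k, w i ≤ 1) (hz : ∀ i, 0 ≤ z i) :
    ∏ i ∈ Finset.range k, z i ^ w i ≤ 1 + ∑ i ∈ Finset.range k, w i * z i := by
  set W : ℕ → ℝ := fun i => if i < k then w i else 1 - ∑ j ∈ Finset.range k, w j with hWdef
  set Z : ℕ → ℝ := fun i => if i < k then z i else 1 with hZdef
  have hWk : W k = 1 - ∑ j ∈ Finset.range k, w j := by simp [hWdef]
  have hZk : Z k = 1 := by simp [hZdef]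
  have hWc : ∀ i ∈ Finset.range k, W i = w i := fun i hi => by
    simp [hWdef, Finset.mem_range.mp hi]
  have hZc : ∀ i ∈ Finset.range k, Z i = z i := fun i hi => by
    simp [hZdef, Finset.mem_range.mp hi]
  have hsum : ∑ i ∈ Finset.range (k+1), W i = 1 := by
    rw [Finset.sum_range_succ, hWk, Finset.sum_congr rfl hWc]
    ring
  have hmain := Real.geom_mean_le_arith_mean_weighted (Finset.range (k+1)) W Z
    (fun i _ => by
      by_cases h : i < k
      · simpa [hWdef, h] using hw i
      · simp only [hWdef, h, if_false]
        linarith)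
    hsum
    (fun i _ => by
      by_cases h : i < k
      · simpa [hZdef, h] using hz i
      · simp [hZdef, h])
  rw [Finset.prod_range_succ, Finset.sum_range_succ] at hmain
  rw [Finset.prod_congr rfl (fun i hi => by rw [hWc i hi, hZc i hi])] at hmain
  rw [Finset.sum_congr rfl (fun i hi => by rw [hWc i hi, hZc i hi])] at hmain
  rw [hZk, hWk, Real.one_rpow, mul_one, mul_one] at hmain
  calc ∏ i ∈ Finset.range k, z i ^ w i ≤ ∑ i ∈ Finset.range k, w i * z i + (1 - ∑ j ∈ Finset.range k, w j) :=
        hmain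
    _ ≤ 1 + ∑ i ∈ Finset.range k, w i * z i := by
        have : 0 ≤ ∑ j ∈ Finset.range k, w j := Finset.sum_nonneg fun i _ => hw i
        linarith

private lemma amgm_ennreal (k : ℕ) (w : ℕ → ℝ) (z : ℕ → ℝ≥0∞) (hw : ∀ i, 0 ≤ w i)
    (hw' : ∑ i ∈ Finset.range k, w i ≤ 1) (hz : ∀ i, z i ≠ ⊤) :
    ∏ i ∈ Finset.range k, z i ^ w i ≤ 1 + ∑ i ∈ Finset.range k, ENNReal.ofReal (w i) * z i := by
  have hzr : ∀ i, z i = ENNReal.ofReal ((z i).toReal) := fun i => by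
    rw [ENNReal.ofReal_toReal (hz i)]
  have h1 : ∏ i ∈ Finset.range k, z i ^ w i
      = ENNReal.ofReal (∏ i ∈ Finset.range k, (z i).toReal ^ w i) := by
    rw [ENNReal.ofReal_prod_of_nonneg
      (fun i _ => Real.rpow_nonneg ENNReal.toReal_nonneg _)]
    refine Finset.prod_congr rfl fun i _ => ?_
    rw [← ENNReal.ofReal_rpow_of_nonneg ENNReal.toReal_nonneg (hw i)]
    rw [ENNReal.ofReal_toReal (hz i)]

  rw [h1]
  refine le_trans (ENNReal.ofReal_le_ofReal
    (amgm_real k w (fun i => (z i).toReal) hw hw' (fun i => ENNReal.toReal_nonneg))) ?_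
  rw [ENNReal.ofReal_add zero_le_one
    (Finset.sum_nonneg fun i _ => mul_nonneg (hw i) ENNReal.toReal_nonneg)]
  rw [ENNReal.ofReal_one]
  refine add_le_add_right ?_ 1
  rw [ENNReal.ofReal_sum_of_nonneg (fun i _ => mul_nonneg (hw i) ENNReal.toReal_nonneg)]
  refine Finset.sum_le_sum fun i _ => ?_
  rw [ENNReal.ofReal_mul (hw i), ENNReal.ofReal_toReal (hz i)]

private lemma iSup_ne_top_of_tendsto {W : ℕ → ℝ≥0∞} {L : ℝ≥0∞} (hW : ∀ k, W k ≠ ⊤)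
    (hL : L ≠ ⊤) (h : Tendsto W atTop (nhds L)) : (⨆ k, W k) ≠ ⊤ := by
  have hev : ∀ᶠ k in atTop, W k < L + 1 :=
    h.eventually_lt_const (ENNReal.lt_add_right hL one_ne_zero)
  obtain ⟨N, hN⟩ := eventually_atTop.mp hev
  have hb : ∀ k, W k ≤ (Finset.range (N+1)).sup W ⊔ (L + 1) := by
    intro k
    rcases le_or_gt k N with hk | hk
    · exact le_sup_of_le_left (Finset.le_sup (Finset.mem_range.mpr (Nat.lt_succ_of_le hk)))
    · exact le_sup_of_le_right (hN k hk.le).le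
  refine ne_top_of_le_ne_top ?_ (iSup_le hb)
  refine (max_lt ?_ ?_).ne
  · exact (Finset.sup_lt_iff (by simp [ENNReal.zero_lt_top])).mpr
      (fun i _ => (hW i).lt_top)
  · exact ENNReal.add_lt_top.mpr ⟨hL.lt_top, ENNReal.one_lt_top⟩

private lemma prodLim_eq_zero {a : ℕ → ℝ≥0∞} {j : ℕ} (h : a j = 0) : prodLim a = 0 := by
  refine le_antisymm ?_ zero_le
  unfold prodLim
  refine limsup_le_of_le (by isBoundedDefault) ?_
  filter_upwards [eventually_gt_atTop j] with k hk
  exact le_of_eq (Finset.prod_eq_zero (Finset.mem_range.mpr hk) h)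

private lemma prodLim_le_of_forall {a : ℕ → ℝ≥0∞} {C : ℝ≥0∞}
    (h : ∀ k, ∏ i ∈ Finset.range k, a i ≤ C) : prodLim a ≤ C :=
  limsup_le_of_le (by isBoundedDefault) (Eventually.of_forall h)

/-- For admissible f⃗, a.e. ∏ᵢ E_n(f i) ≤ (∏ᵢ E_n(f i^{p i} ω i)^{1/p i}) ·
(∏ᵢ E_n(ω i^{1-p i'})^{1/p i'}) < ∞. -/
theorem prod_condexp_le_prod_condexp_mul
    {m0 : MeasurableSpace Ω} (μ : Measure Ω) [IsProbabilityMeasure μ] (hc : μ.IsComplete)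
    (ℱ : Filtration ℕ m0) (p : ℕ → ℝ) (p₀ : ℝ) (v : Ω → ℝ) (ω : ℕ → Ω → ℝ)
    (hS : Standing μ ℱ p p₀ v ω)
    (f : ℕ → Ω → ℝ) (Lf : ℝ≥0∞) (hf : Adm μ p ω f Lf) :
    ∀ n : ℕ, ∀ᵐ x ∂μ,
      prodLim (fun i => ENNReal.ofReal ((μ[f i|ℱ n]) x))
        ≤ prodLim (fun i =>
            ENNReal.ofReal ((μ[(fun y => f i y ^ p i * ω i y)|ℱ n]) x) ^ (1 / p i)) *
          prodLim (fun i =>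
            ENNReal.ofReal ((μ[sigmaW (ω i) (p i)|ℱ n]) x) ^ (1 / conjExp (p i))) ∧
      prodLim (fun i =>
            ENNReal.ofReal ((μ[(fun y => f i y ^ p i * ω i y)|ℱ n]) x) ^ (1 / p i)) *
          prodLim (fun i =>
            ENNReal.ofReal ((μ[sigmaW (ω i) (p i)|ℱ n]) x) ^ (1 / conjExp (p i))) ≠ ⊤ := by
  obtain ⟨hfmeas, hf0, hfnorm, hLftop, hLfprod⟩ := hf
  intro n
  have hm : ℱ n ≤ m0 := ℱ.le n
  have hp1 : ∀ i, 1 < p i := hS.hp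
  have hppos : ∀ i, 0 < p i := fun i => lt_trans zero_lt_one (hp1 i)
  have hp₀ : 0 < p₀ := hS.hp₀
  -- basic objects
  set a : ℕ → ℝ≥0∞ :=
    fun i => ∫⁻ x, ENNReal.ofReal (f i x) ^ p i * ENNReal.ofReal (ω i x) ∂μ with hadef
  have hwnorm : ∀ i, wNorm μ (f i) (p i) (ω i) = a i ^ (1 / p i) := fun i => rfl
  have hatop : ∀ i, a i ≠ ⊤ := by
    intro i h
    apply hfnorm i
    rw [hwnorm i, h, ENNReal.top_rpow_of_pos (one_div_pos.mpr (hppos i))]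
  have hg0 : ∀ i x, 0 ≤ f i x ^ p i * ω i x :=
    fun i x => mul_nonneg (Real.rpow_nonneg (hf0 i x) _) (hS.hωpos i x).le
  have hgmeas : ∀ i, Measurable (fun y => f i y ^ p i * ω i y) :=
    fun i => ((hfmeas i).pow_const (p i)).mul (hS.hω i)
  have hglint : ∀ i, ∫⁻ x, ENNReal.ofReal (f i x ^ p i * ω i x) ∂μ = a i := by
    intro i
    rw [hadef]
    refine lintegral_congr fun x => ?_
    rw [ENNReal.ofReal_rpow_of_nonneg (hf0 i x) (hppos i).le,
      ← ENNReal.ofReal_mul (Real.rpow_nonneg (hf0 i x) _)]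
  have hgint : ∀ i, Integrable (fun y => f i y ^ p i * ω i y) μ := by
    intro i
    refine ⟨(hgmeas i).aestronglyMeasurable, ?_⟩
    rw [hasFiniteIntegral_iff_ofReal (Eventually.of_forall (hg0 i))]
    rw [hglint i]
    exact (hatop i).lt_top
  have hσ0 : ∀ i x, 0 ≤ sigmaW (ω i) (p i) x :=
    fun i x => Real.rpow_nonneg (hS.hωpos i x).le _
  have hσlint : ∀ i, ∫⁻ x, ENNReal.ofReal (sigmaW (ω i) (p i) x) ∂μ ≠ ⊤ := by
    intro i
    have h := (hS.hσint i).hasFiniteIntegral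
    rw [hasFiniteIntegral_iff_ofReal (Eventually.of_forall (hσ0 i))] at h
    exact h.ne
  -- integrability of f i via Hölder
  have hfint : ∀ i, Integrable (f i) μ := by
    intro i
    have hpq : (p i).HolderConjugate (conjExp (p i)) :=
      Real.HolderConjugate.conjExponent (hp1 i)
    have hq'pos : 0 < conjExp (p i) := hpq.symm.pos
    set u : Ω → ℝ≥0∞ :=
      fun x => (ENNReal.ofReal (f i x) ^ p i * ENNReal.ofReal (ω i x)) ^ (1 / p i) with hudef
    set vv : Ω → ℝ≥0∞ :=
      fun x => ENNReal.ofReal (sigmaW (ω i) (p i) x) ^ (1 / conjExp (p i)) with hvdef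
    have hupow : ∀ x, u x ^ p i = ENNReal.ofReal (f i x) ^ p i * ENNReal.ofReal (ω i x) := by
      intro x
      rw [hudef, ← ENNReal.rpow_mul, one_div_mul_cancel (hppos i).ne', ENNReal.rpow_one]
    have hvpow : ∀ x, vv x ^ conjExp (p i) = ENNReal.ofReal (sigmaW (ω i) (p i) x) := by
      intro x
      rw [hvdef, ← ENNReal.rpow_mul, one_div_mul_cancel hq'pos.ne', ENNReal.rpow_one]
    have humeas : Measurable u := (((hfmeas i).ennreal_ofReal.pow_const _).mul
      (hS.hω i).ennreal_ofReal).pow_const _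
    have hvmeas : Measurable vv :=
      (((hS.hω i).pow_const _).ennreal_ofReal).pow_const _
    have hpoint : ∀ x, ENNReal.ofReal (f i x) = u x * vv x := by
      intro x
      have hωx : (0:ℝ) < ω i x := hS.hωpos i x
      have hWne : ENNReal.ofReal (ω i x) ≠ 0 := (ENNReal.ofReal_pos.mpr hωx).ne'
      have hu : u x = ENNReal.ofReal (f i x) * ENNReal.ofReal (ω i x) ^ (1 / p i) := by
        show (ENNReal.ofReal (f i x) ^ p i * ENNReal.ofReal (ω i x)) ^ (1 / p i) = _
        rw [ENNReal.mul_rpow_of_nonneg _ _ (one_div_pos.mpr (hppos i)).le,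
          ← ENNReal.rpow_mul, mul_one_div_cancel (hppos i).ne', ENNReal.rpow_one]
      have hv : vv x = ENNReal.ofReal (ω i x) ^ (-(1 / p i)) := by
        show ENNReal.ofReal (sigmaW (ω i) (p i) x) ^ (1 / conjExp (p i)) = _
        have h1 : ENNReal.ofReal (sigmaW (ω i) (p i) x)
            = ENNReal.ofReal (ω i x) ^ (-(1 / (p i - 1))) := by
          rw [ENNReal.ofReal_rpow_of_pos hωx]
          rfl
        rw [h1, ← ENNReal.rpow_mul]
        congr 1
        have hpm1 : p i - 1 ≠ 0 := sub_ne_zero.mpr (hp1 i).ne'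
        have hce : (1:ℝ)/conjExp (p i) = (p i - 1)/p i := by
          simp only [conjExp]; rw [one_div_div]
        rw [hce, neg_mul, neg_inj, div_mul_div_comm, one_mul,
          div_mul_cancel_left₀ hpm1, one_div]
      rw [hu, hv, mul_assoc, ← ENNReal.rpow_add _ _ hWne ENNReal.ofReal_ne_top,
        add_neg_cancel, ENNReal.rpow_zero, mul_one]
    refine ⟨(hfmeas i).aestronglyMeasurable, ?_⟩
    rw [hasFiniteIntegral_iff_ofReal (Eventually.of_forall (hf0 i))]
    calc ∫⁻ x, ENNReal.ofReal (f i x) ∂μ = ∫⁻ x, (u * vv) x ∂μ :=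
          lintegral_congr fun x => hpoint x
      _ ≤ (∫⁻ x, u x ^ p i ∂μ) ^ (1 / p i) *
            (∫⁻ x, vv x ^ conjExp (p i) ∂μ) ^ (1 / conjExp (p i)) :=
          ENNReal.lintegral_mul_le_Lp_mul_Lq μ hpq humeas.aemeasurable hvmeas.aemeasurable
      _ < ⊤ := by
          rw [lintegral_congr hupow, lintegral_congr hvpow]
          refine ENNReal.mul_lt_top ?_ ?_
          · exact ENNReal.rpow_lt_top_of_nonneg (one_div_pos.mpr (hppos i)).le (hatop i)
          · exact ENNReal.rpow_lt_top_of_nonneg (one_div_pos.mpr hq'pos).le (hσlint i)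
  -- conditional Hölder for each i, a.e.
  have hhold : ∀ᵐ x ∂μ, ∀ i : ℕ, ENNReal.ofReal ((μ[f i|ℱ n]) x) ≤
      ENNReal.ofReal ((μ[(fun y => f i y ^ p i * ω i y)|ℱ n]) x) ^ (1 / p i) *
      ENNReal.ofReal ((μ[sigmaW (ω i) (p i)|ℱ n]) x) ^ (1 / conjExp (p i)) := by
    rw [ae_all_iff]
    intro i
    exact condexp_holder (Ω := Ω) μ hm (hp1 i) (hf0 i) (hS.hωpos i) (hS.hσint i)
      (hgint i) (hfint i)
  by_cases hzero : ∃ j, wNorm μ (f j) (p j) (ω j) = 0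
  · -- degenerate case: some factor vanishes
    obtain ⟨j, hj⟩ := hzero
    have haj : a j = 0 := by
      rw [hwnorm j] at hj
      rcases ENNReal.rpow_eq_zero_iff.mp hj with ⟨h, _⟩ | ⟨_, hneg⟩
      · exact h
      · exact absurd hneg (not_lt.mpr (one_div_pos.mpr (hppos j)).le)
    have hfz : ∀ᵐ x ∂μ, f j x = 0 := by
      have hmeasj : Measurable fun x =>
          ENNReal.ofReal (f j x) ^ p j * ENNReal.ofReal (ω j x) :=
        ((hfmeas j).ennreal_ofReal.pow_const _).mul (hS.hω j).ennreal_ofReal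
      have h0 := (lintegral_eq_zero_iff hmeasj).mp haj
      filter_upwards [h0] with x hx
      have hx' : ENNReal.ofReal (f j x) ^ p j * ENNReal.ofReal (ω j x) = 0 := hx
      have hωne : ENNReal.ofReal (ω j x) ≠ 0 := (ENNReal.ofReal_pos.mpr (hS.hωpos j x)).ne'
      have h2 : ENNReal.ofReal (f j x) ^ p j = 0 := by
        rcases mul_eq_zero.mp hx' with h | h
        · exact h
        · exact absurd h hωne
      rcases ENNReal.rpow_eq_zero_iff.mp h2 with ⟨h3, _⟩ | ⟨h3, _⟩
      · exact le_antisymm (ENNReal.ofReal_eq_zero.mp h3) (hf0 j x)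
      · exact absurd h3 ENNReal.ofReal_ne_top
    have hgz : (fun y => f j y ^ p j * ω j y) =ᵐ[μ] 0 := by
      filter_upwards [hfz] with x hx
      simp [hx, Real.zero_rpow (hppos j).ne']
    have hfz' : f j =ᵐ[μ] 0 := by filter_upwards [hfz] with x hx; simpa using hx
    have hcgz : μ[(fun y => f j y ^ p j * ω j y)|ℱ n] =ᵐ[μ] 0 :=
      (condExp_congr_ae hgz).trans (by rw [condExp_zero])
    have hcfz : μ[f j|ℱ n] =ᵐ[μ] 0 :=
      (condExp_congr_ae hfz').trans (by rw [condExp_zero])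
    filter_upwards [hcgz, hcfz] with x hx1 hx2
    constructor
    · have hL : prodLim (fun i => ENNReal.ofReal ((μ[f i|ℱ n]) x)) = 0 := by
        refine prodLim_eq_zero (j := j) ?_
        have : (μ[f j|ℱ n]) x = 0 := hx2
        simp [this]
      rw [hL]
      exact zero_le
    · have hP : prodLim (fun i =>
          ENNReal.ofReal ((μ[(fun y => f i y ^ p i * ω i y)|ℱ n]) x) ^ (1 / p i)) = 0 := by
        refine prodLim_eq_zero (j := j) ?_
        have h4 : (μ[(fun y => f j y ^ p j * ω j y)|ℱ n]) x = 0 := hx1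
        rw [h4, ENNReal.ofReal_zero, ENNReal.zero_rpow_of_pos (one_div_pos.mpr (hppos j))]
      rw [hP, zero_mul]
      exact ENNReal.zero_ne_top
  · -- main case: all weighted norms are nonzero
    push_neg at hzero
    have ha0 : ∀ i, a i ≠ 0 := by
      intro i h
      exact hzero i (by rw [hwnorm i, h, ENNReal.zero_rpow_of_pos (one_div_pos.mpr (hppos i))])
    have hsum1 : HasSum (fun i => p₀ / p i) 1 := by
      have h := hS.hps.mul_left p₀
      rw [mul_one_div, div_self hp₀.ne'] at h
      simpa [mul_one_div, div_eq_mul_inv] using h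
    have hθ0 : ∀ i, 0 ≤ p₀ / p i := fun i => (div_pos hp₀ (hppos i)).le
    have hcmeas : ∀ i : ℕ, Measurable (μ[(fun y => f i y ^ p i * ω i y)|ℱ n]) :=
      fun i => (stronglyMeasurable_condExp.mono hm).measurable
    set S : Ω → ℝ≥0∞ := fun x => ∑' i, ENNReal.ofReal (p₀ / p i) *
      (ENNReal.ofReal ((μ[(fun y => f i y ^ p i * ω i y)|ℱ n]) x) / a i) with hSdef
    have hterm_meas : ∀ i : ℕ, Measurable fun x =>
        ENNReal.ofReal (p₀ / p i) *
          (ENNReal.ofReal ((μ[(fun y => f i y ^ p i * ω i y)|ℱ n]) x) / a i) :=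
      fun i => (((hcmeas i).ennreal_ofReal).div_const _).const_mul _
    have hSmeas : Measurable S := Measurable.ennreal_tsum hterm_meas
    have hEglint : ∀ i : ℕ,
        ∫⁻ x, ENNReal.ofReal ((μ[(fun y => f i y ^ p i * ω i y)|ℱ n]) x) ∂μ = a i := by
      intro i
      rw [← ofReal_integral_eq_lintegral_ofReal integrable_condExp
        (condExp_nonneg (Eventually.of_forall (hg0 i)))]
      rw [integral_condExp hm]
      rw [ofReal_integral_eq_lintegral_ofReal (hgint i) (Eventually.of_forall (hg0 i))]
      exact hglint i
    have hSint : ∫⁻ x, S x ∂μ = 1 := by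
      rw [show (fun x => S x) = S from rfl, hSdef]
      rw [lintegral_tsum (fun i => (hterm_meas i).aemeasurable)]
      have hterm : ∀ i : ℕ, ∫⁻ x, ENNReal.ofReal (p₀ / p i) *
          (ENNReal.ofReal ((μ[(fun y => f i y ^ p i * ω i y)|ℱ n]) x) / a i) ∂μ
          = ENNReal.ofReal (p₀ / p i) := by
        intro i
        rw [lintegral_const_mul _ (((hcmeas i).ennreal_ofReal).div_const _)]
        simp_rw [div_eq_mul_inv]
        rw [lintegral_mul_const' _ _ (ENNReal.inv_ne_top.mpr (ha0 i)), hEglint i,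
          ENNReal.mul_inv_cancel (ha0 i) (hatop i), mul_one]
      rw [tsum_congr hterm, ← ENNReal.ofReal_tsum_of_nonneg hθ0 hsum1.summable,
        hsum1.tsum_eq, ENNReal.ofReal_one]
    have hSfin : ∀ᵐ x ∂μ, S x < ⊤ :=
      ae_lt_top hSmeas (by rw [hSint]; exact ENNReal.one_ne_top)
    have hWtop : ∀ k, (∏ i ∈ Finset.range k, wNorm μ (f i) (p i) (ω i)) ≠ ⊤ :=
      fun k => (ENNReal.prod_lt_top (fun i _ => (hfnorm i).lt_top)).ne
    have hM : (⨆ k, ∏ i ∈ Finset.range k, wNorm μ (f i) (p i) (ω i)) ≠ ⊤ :=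
      iSup_ne_top_of_tendsto hWtop hLftop hLfprod
    set M := ⨆ k, ∏ i ∈ Finset.range k, wNorm μ (f i) (p i) (ω i) with hMdef
    filter_upwards [hhold, hS.hEσ n, hSfin] with x hx hQ hSx
    set C := ((1 + S x) * M ^ p₀) ^ (1 / p₀) with hCdef
    have hCtop : C ≠ ⊤ := by
      refine ENNReal.rpow_ne_top_of_nonneg (one_div_pos.mpr hp₀).le ?_
      exact ENNReal.mul_ne_top (ENNReal.add_ne_top.mpr ⟨ENNReal.one_ne_top, hSx.ne⟩)
        (ENNReal.rpow_ne_top_of_nonneg hp₀.le hM)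
    have hPk : ∀ k, ∏ i ∈ Finset.range k,
        ENNReal.ofReal ((μ[(fun y => f i y ^ p i * ω i y)|ℱ n]) x) ^ (1 / p i) ≤ C := by
      intro k
      have step1 : ∏ i ∈ Finset.range k,
          ENNReal.ofReal ((μ[(fun y => f i y ^ p i * ω i y)|ℱ n]) x) ^ (1 / p i)
          = (∏ i ∈ Finset.range k,
            ENNReal.ofReal ((μ[(fun y => f i y ^ p i * ω i y)|ℱ n]) x) ^ (p₀ / p i))
            ^ (1 / p₀) := by
        rw [← ENNReal.prod_rpow_of_nonneg (one_div_pos.mpr hp₀).le]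
        refine Finset.prod_congr rfl fun i _ => ?_
        rw [← ENNReal.rpow_mul]
        congr 1
        rw [div_mul_div_comm, mul_one, mul_comm (p i) p₀, div_mul_cancel_left₀ hp₀.ne', one_div]
      have hsumle : ∑ i ∈ Finset.range k, p₀ / p i ≤ 1 :=
        sum_le_hasSum _ (fun i _ => hθ0 i) hsum1
      have hzne : ∀ i : ℕ,
          ENNReal.ofReal ((μ[(fun y => f i y ^ p i * ω i y)|ℱ n]) x) / a i ≠ ⊤ :=
        fun i => (ENNReal.div_lt_top ENNReal.ofReal_ne_top (ha0 i)).ne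
      have hfac : ∀ i ∈ Finset.range k,
          ENNReal.ofReal ((μ[(fun y => f i y ^ p i * ω i y)|ℱ n]) x) ^ (p₀ / p i)
          = (ENNReal.ofReal ((μ[(fun y => f i y ^ p i * ω i y)|ℱ n]) x) / a i) ^ (p₀ / p i)
            * a i ^ (p₀ / p i) := by
        intro i _
        rw [ENNReal.div_rpow_of_nonneg _ _ (hθ0 i)]
        rw [ENNReal.div_mul_cancel
          (ENNReal.rpow_pos (pos_iff_ne_zero.mpr (ha0 i)) (hatop i)).ne'
          (ENNReal.rpow_ne_top_of_nonneg (hθ0 i) (hatop i))]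
      have hsplit : ∏ i ∈ Finset.range k,
          ENNReal.ofReal ((μ[(fun y => f i y ^ p i * ω i y)|ℱ n]) x) ^ (p₀ / p i)
          = (∏ i ∈ Finset.range k,
              (ENNReal.ofReal ((μ[(fun y => f i y ^ p i * ω i y)|ℱ n]) x) / a i) ^ (p₀ / p i)) *
            (∏ i ∈ Finset.range k, a i ^ (p₀ / p i)) := by
        rw [← Finset.prod_mul_distrib]
        exact Finset.prod_congr rfl hfac
      have hamgm : ∏ i ∈ Finset.range k,
          (ENNReal.ofReal ((μ[(fun y => f i y ^ p i * ω i y)|ℱ n]) x) / a i) ^ (p₀ / p i)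
          ≤ 1 + S x := by
        refine (amgm_ennreal k (fun i => p₀ / p i)
          (fun i => ENNReal.ofReal ((μ[(fun y => f i y ^ p i * ω i y)|ℱ n]) x) / a i)
          hθ0 hsumle hzne).trans ?_
        exact add_le_add_right (ENNReal.sum_le_tsum _) 1
      have haprod : ∏ i ∈ Finset.range k, a i ^ (p₀ / p i) ≤ M ^ p₀ := by
        have heq : ∀ i ∈ Finset.range k,
            a i ^ (p₀ / p i) = wNorm μ (f i) (p i) (ω i) ^ p₀ := by
          intro i _
          rw [hwnorm i, ← ENNReal.rpow_mul]
          congr 1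
          field_simp
        rw [Finset.prod_congr rfl heq, ENNReal.prod_rpow_of_nonneg hp₀.le]
        refine ENNReal.rpow_le_rpow ?_ hp₀.le
        rw [hMdef]
        exact le_iSup (fun k => ∏ i ∈ Finset.range k, wNorm μ (f i) (p i) (ω i)) k
      calc ∏ i ∈ Finset.range k,
          ENNReal.ofReal ((μ[(fun y => f i y ^ p i * ω i y)|ℱ n]) x) ^ (1 / p i)
          = (∏ i ∈ Finset.range k,
              ENNReal.ofReal ((μ[(fun y => f i y ^ p i * ω i y)|ℱ n]) x) ^ (p₀ / p i))
              ^ (1 / p₀) := step1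
        _ ≤ ((1 + S x) * M ^ p₀) ^ (1 / p₀) := by
            refine ENNReal.rpow_le_rpow ?_ (one_div_pos.mpr hp₀).le
            rw [hsplit]
            exact mul_le_mul' hamgm haprod
    have hPtop : prodLim (fun i =>
        ENNReal.ofReal ((μ[(fun y => f i y ^ p i * ω i y)|ℱ n]) x) ^ (1 / p i)) ≠ ⊤ :=
      ((prodLim_le_of_forall hPk).trans_lt hCtop.lt_top).ne
    refine ⟨?_, ENNReal.mul_ne_top hPtop hQ⟩
    calc prodLim (fun i => ENNReal.ofReal ((μ[f i|ℱ n]) x))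
        ≤ limsup ((fun k => ∏ i ∈ Finset.range k,
            ENNReal.ofReal ((μ[(fun y => f i y ^ p i * ω i y)|ℱ n]) x) ^ (1 / p i)) *
            (fun k => ∏ i ∈ Finset.range k,
            ENNReal.ofReal ((μ[sigmaW (ω i) (p i)|ℱ n]) x) ^ (1 / conjExp (p i)))) atTop := by
          refine limsup_le_limsup ?_
          refine Eventually.of_forall fun k => ?_
          show ∏ i ∈ Finset.range k, ENNReal.ofReal ((μ[f i|ℱ n]) x) ≤ _
          rw [Pi.mul_apply, ← Finset.prod_mul_distrib]
          exact Finset.prod_le_prod' fun i _ => hx i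
      _ ≤ prodLim (fun i =>
            ENNReal.ofReal ((μ[(fun y => f i y ^ p i * ω i y)|ℱ n]) x) ^ (1 / p i)) *
          prodLim (fun i =>
            ENNReal.ofReal ((μ[sigmaW (ω i) (p i)|ℱ n]) x) ^ (1 / conjExp (p i))) :=
          ENNReal.limsup_mul_le' (Or.inr hQ) (Or.inl hPtop)
end
end

section
/- In the martingale setting with weight v, weight vector ω⃗ = (ω_1, ω_2, ...), exponents 1 < p_i < ∞ with ∑_{i=1}^∞ 1/p_i = 1/p, under the standing assumptions: if there is a constant C such that for all stopping times τ and all nonnegative f_i ∈ L^{p_i}(ω_i) with ∏_i ‖f_i‖_{L^{p_i}(ω_i)} < ∞, (∫_{{τ<∞}} ∏_{i=1}^∞ E_τ(f_i)^p v dμ)^{1/p} ≤ C ∏_{i=1}^∞ ‖f_i‖_{L^{p_i}(ω_i)}, then there is a constant C' such that ‖𝔐(f⃗)‖_{L^{p,∞}(v)} ≤ C' ∏_{i=1}^∞ ‖f_i‖_{L^{p_i}(ω_i)} for all such f⃗. -/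
open MeasureTheory Filter
open scoped ENNReal NNReal

noncomputable section

variable {Ω : Type*}

/-- If the testing inequality holds (for some finite constant), then the weak-type
inequality ‖𝔐(f⃗)‖_{L^{p₀,∞}(v)} ≤ C' ∏ᵢ ‖f i‖_{L^{p i}(ω i)} holds for all admissible f⃗. -/
theorem weakIneq_of_testIneq
    {m0 : MeasurableSpace Ω} (μ : Measure Ω) [IsProbabilityMeasure μ] (hc : μ.IsComplete)
    (ℱ : Filtration ℕ m0) (p : ℕ → ℝ) (p₀ : ℝ) (v : Ω → ℝ) (ω : ℕ → Ω → ℝ)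
    (hS : Standing μ ℱ p p₀ v ω)
    (h : ∃ C : ℝ≥0∞, C ≠ ⊤ ∧ TestIneq μ ℱ p p₀ v ω C) :
    ∃ C' : ℝ≥0∞, C' ≠ ⊤ ∧ WeakIneq μ ℱ p p₀ v ω C' := by
  classical
  obtain ⟨C, hC, hT⟩ := h
  refine ⟨C, hC, ?_⟩
  intro f Lf hf
  set G : ℕ → Ω → ℝ≥0∞ := fun n x => prodLim fun i => ENNReal.ofReal ((μ[f i|ℱ n]) x) with hGdef
  have hGmeas : ∀ n, Measurable[ℱ n] (G n) := by
    intro n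
    refine Measurable.limsup (f := fun k x => ∏ i ∈ Finset.range k, ENNReal.ofReal ((μ[f i|ℱ n]) x)) fun k => ?_
    exact Finset.measurable_prod _ fun i _ =>
      ENNReal.measurable_ofReal.comp (stronglyMeasurable_condExp.measurable)
  have hGmeas0 : ∀ n, Measurable (G n) := fun n => (hGmeas n).mono (ℱ.le n) le_rfl
  rw [wkNorm]
  refine iSup_le fun lam => ?_
  set τ : Ω → ℕ∞ := fun x =>
    if h : ∃ n, (lam : ℝ≥0∞) < G n x then ((Nat.find h : ℕ) : ℕ∞) else ⊤ with hτdef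
  have hτeq : ∀ x, τ x ≠ ⊤ ↔ ∃ n, (lam : ℝ≥0∞) < G n x := by
    intro x
    by_cases h : ∃ n, (lam : ℝ≥0∞) < G n x
    · simp [hτdef, h]
    · simp [hτdef, h]
  have hτ : IsStopT ℱ τ := by
    intro n
    have : {x | τ x ≤ (n : ℕ∞)} = ⋃ k ∈ Finset.range (n + 1), {x | (lam : ℝ≥0∞) < G k x} := by
      ext x
      simp only [Set.mem_setOf_eq, Set.mem_iUnion, Finset.mem_range]
      by_cases h : ∃ m, (lam : ℝ≥0∞) < G m x
      · simp only [hτdef, dif_pos h, Nat.cast_le]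
        rw [Nat.find_le_iff]
        constructor
        · rintro ⟨m, hm, hm'⟩; exact ⟨m, Nat.lt_succ_of_le hm, hm'⟩
        · rintro ⟨m, hm, hm'⟩; exact ⟨m, Nat.lt_succ_iff.mp hm, hm'⟩
      · push_neg at h
        simp only [hτdef, dif_neg (not_exists.mpr fun m hm => absurd hm (not_lt.mpr (h m)))]
        constructor
        · intro hle; exact absurd hle (by simp)
        · rintro ⟨m, _, hm'⟩; exact absurd hm' (not_lt.mpr (h m))
    rw [this]
    refine MeasurableSet.biUnion (Finset.range (n + 1)).countable_toSet fun k hk => ?_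
    have hk' : k ≤ n := Nat.lt_succ_iff.mp (Finset.mem_range.mp hk)
    exact ℱ.mono hk' _ (measurableSet_lt (@measurable_const _ _ _ (ℱ k) _) (hGmeas k))
  have hSmeas : MeasurableSet {x | τ x ≠ ⊤} := by
    have : {x | τ x ≠ ⊤} = ⋃ n, {x | (lam : ℝ≥0∞) < G n x} := by
      ext x; simp [hτeq x, Set.mem_iUnion]
    rw [this]
    exact MeasurableSet.iUnion fun n =>
      measurableSet_lt measurable_const (hGmeas0 n)
  have hsetEq : {x | (lam : ℝ≥0∞) < doobM μ ℱ f x} = {x | τ x ≠ ⊤} := by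
    ext x
    simp only [Set.mem_setOf_eq, doobM, hτeq x, lt_iSup_iff]
    exact Iff.rfl
  have hp₀ := hS.hp₀
  have hp₀ne : p₀ ≠ 0 := ne_of_gt hp₀
  have key : ∀ x ∈ {x | τ x ≠ ⊤},
      (lam : ℝ≥0∞) ^ p₀ * ENNReal.ofReal (v x) ≤
        (prodLim fun i => ENNReal.ofReal (stopCE μ ℱ (f i) τ x)) ^ p₀ *
          ENNReal.ofReal (v x) := by
    intro x hx
    have hex : ∃ n, (lam : ℝ≥0∞) < G n x := (hτeq x).mp hx
    have hτx : τ x = ((Nat.find hex : ℕ) : ℕ∞) := by simp [hτdef, dif_pos hex]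
    have hτnat : (τ x).toNat = Nat.find hex := by rw [hτx]; simp
    have heq : (prodLim fun i => ENNReal.ofReal (stopCE μ ℱ (f i) τ x)) = G (Nat.find hex) x := by
      simp only [stopCE, hτnat, hGdef]
    rw [heq]
    exact mul_le_mul_left
      (ENNReal.rpow_le_rpow (le_of_lt (Nat.find_spec hex)) hp₀.le) _
  calc (lam : ℝ≥0∞) *
        (∫⁻ x in {x | (lam : ℝ≥0∞) < doobM μ ℱ f x}, ENNReal.ofReal (v x) ∂μ) ^ (1 / p₀)
      = ((lam : ℝ≥0∞) ^ p₀ * ∫⁻ x in {x | τ x ≠ ⊤}, ENNReal.ofReal (v x) ∂μ) ^ (1 / p₀) := by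
        rw [hsetEq, ENNReal.mul_rpow_of_nonneg _ _ (by positivity : (0:ℝ) ≤ 1 / p₀),
          ← ENNReal.rpow_mul, mul_one_div_cancel hp₀ne, ENNReal.rpow_one]
    _ = (∫⁻ x in {x | τ x ≠ ⊤}, (lam : ℝ≥0∞) ^ p₀ * ENNReal.ofReal (v x) ∂μ) ^ (1 / p₀) := by
        rw [lintegral_const_mul' _ _ (ENNReal.rpow_ne_top_of_nonneg hp₀.le ENNReal.coe_ne_top)]
    _ ≤ (∫⁻ x in {x | τ x ≠ ⊤},
          (prodLim fun i => ENNReal.ofReal (stopCE μ ℱ (f i) τ x)) ^ p₀ *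
            ENNReal.ofReal (v x) ∂μ) ^ (1 / p₀) := by
        refine ENNReal.rpow_le_rpow ?_ (by positivity)
        refine lintegral_mono_ae ?_
        exact (ae_restrict_mem hSmeas).mono key
    _ ≤ C * Lf := hT τ hτ f Lf hf
end
end
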